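/- arXiv:1603.03516 — 4 statements merged into one kernel-verified Lean document; each statement's English description precedes it below -/
import Mathlib

section
/- Let Σ = BBᵀ + Σ_u where B ∈ ℝ^{d×r} and Σ_u ∈ ℝ^{d×d} is symmetric positive semidefinite with ‖Σ_u‖_2 ≤ C₀. Let λ_1 ≥ … ≥ λ_d be the eigenvalues of Σ with orthonormal eigenvectors v_1,…,v_d, V = [v_1,…,v_r], and let λ̄_1 ≥ … ≥ λ̄_r be the nonzero eigenvalues of BBᵀ. Then: (i) for every C₁ > 0 there exists C₂ > 0 depending only on C₀, C₁, r such that if ‖B‖_max ≤ C₁, λ̄_r ≥ d/C₁, min_{1≤i≤r}(λ̄_i − λ̄_{i+1}) ≥ d/C₁ (with λ̄_{r+1} := 0), and d ≥ C₂, then max_{i≤r} ‖v_i‖_∞ ≤ C₂/√d (hence μ(V) ≤ r·C₂²), and moreover |λ_i − λ̄_i| ≤ C₀ for all i ≤ r; (ii) conversely, for every C₁ > 0 there exists C₂ > 0 depending only on C₀, C₁, r such that if μ(V) ≤ C₁, λ_r ≥ d/C₁ and λ_1 ≤ C₁·d, then ‖B‖_max ≤ C₂. -/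
open Matrix BigOperators

/-- Entrywise max norm: largest absolute value of an entry. -/
noncomputable def matMaxNorm {m n : Type*} [Fintype m] [Fintype n] (M : Matrix m n ℝ) : ℝ :=
  ⨆ i, ⨆ j, |M i j|

/-- Matrix ∞-norm: maximum absolute row sum. -/
noncomputable def matInfNorm {m n : Type*} [Fintype m] [Fintype n] (M : Matrix m n ℝ) : ℝ :=
  ⨆ i, ∑ j, |M i j|

/-- Matrix 1-norm: maximum absolute column sum. -/
noncomputable def matOneNorm {m n : Type*} [Fintype m] [Fintype n] (M : Matrix m n ℝ) : ℝ :=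
  ⨆ j, ∑ i, |M i j|

/-- Euclidean norm of a vector. -/
noncomputable def vec2Norm {n : Type*} [Fintype n] (x : n → ℝ) : ℝ :=
  Real.sqrt (∑ i, (x i) ^ 2)

/-- ℓ∞ norm of a vector. -/
noncomputable def vecSupNorm {n : Type*} [Fintype n] (x : n → ℝ) : ℝ :=
  ⨆ i, |x i|

/-- Spectral norm (operator 2-norm) of a matrix. -/
noncomputable def matSpecNorm {m n : Type*} [Fintype m] [Fintype n] (M : Matrix m n ℝ) : ℝ :=
  sSup {c : ℝ | ∃ x : n → ℝ, vec2Norm x ≤ 1 ∧ c = vec2Norm (M.mulVec x)}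

/-- Coherence of a d × r matrix with orthonormal columns. -/
noncomputable def matCoherence {d r : ℕ} (V : Matrix (Fin d) (Fin r) ℝ) : ℝ :=
  ((d : ℝ) / (r : ℝ)) * ⨆ i, ∑ j, (V i j) ^ 2

/-- Inverse of the positive semidefinite square root of a matrix (junk value otherwise). -/
noncomputable def matInvSqrt {n : Type*} [Fintype n] [DecidableEq n] (S : Matrix n n ℝ) :
    Matrix n n ℝ :=
  letI := Classical.propDecidable
  if h : S.PosSemidef then
    (h.1.eigenvectorUnitary.1 * diagonal ((↑) ∘ (√·) ∘ h.1.eigenvalues) *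
      (star h.1.eigenvectorUnitary : Matrix n n ℝ))⁻¹ else 0

/-- Weighted max-norm for matrices with d₁ + d₂ rows. -/
noncomputable def wMaxNorm {d₁ d₂ : ℕ} {n : Type*} [Fintype n]
    (M : Matrix (Fin d₁ ⊕ Fin d₂) n ℝ) : ℝ :=
  matMaxNorm (Matrix.of fun i j =>
    (Sum.elim (fun _ : Fin d₁ => Real.sqrt d₁) (fun _ : Fin d₂ => Real.sqrt d₂) i) * M i j)

/-- Huber loss with parameter α. -/
noncomputable def huberLoss (α x : ℝ) : ℝ := if |x| ≤ α then x ^ 2 else 2 * α * |x| - α ^ 2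


namespace PV
open Finset



/-- dot product -/
noncomputable def dot {n : Type*} [Fintype n] (x y : n → ℝ) : ℝ := ∑ k, x k * y k

lemma dot_comm {n : Type*} [Fintype n] (x y : n → ℝ) : dot x y = dot y x := by
  unfold dot; exact Finset.sum_congr rfl fun k _ => mul_comm _ _

lemma dot_self_nonneg {n : Type*} [Fintype n] (x : n → ℝ) : 0 ≤ dot x x :=
  Finset.sum_nonneg fun k _ => mul_self_nonneg _

lemma dot_self_eq_sum_sq {n : Type*} [Fintype n] (x : n → ℝ) : dot x x = ∑ k, (x k)^2 := by
  unfold dot; exact Finset.sum_congr rfl fun k _ => (sq (x k)).symm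

lemma dot_cs {n : Type*} [Fintype n] (x y : n → ℝ) : (dot x y)^2 ≤ dot x x * dot y y := by
  rw [dot_self_eq_sum_sq, dot_self_eq_sum_sq]
  exact Finset.sum_mul_sq_le_sq_mul_sq _ _ _

lemma dot_sub_left {n : Type*} [Fintype n] (x y z : n → ℝ) :
    dot (fun a => x a - y a) z = dot x z - dot y z := by
  unfold dot; rw [← Finset.sum_sub_distrib]; exact Finset.sum_congr rfl fun k _ => by ring

lemma dot_sub_right {n : Type*} [Fintype n] (x y z : n → ℝ) :
    dot z (fun a => x a - y a) = dot z x - dot z y := by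
  unfold dot; rw [← Finset.sum_sub_distrib]; exact Finset.sum_congr rfl fun k _ => by ring

/-- abs of entry bounded by 2-norm-squared fact: |x a| ≤ √(dot x x) -/
lemma abs_entry_le_sqrt_dot {n : Type*} [Fintype n] (x : n → ℝ) (a : n) :
    |x a| ≤ Real.sqrt (dot x x) := by
  rw [← Real.sqrt_sq_eq_abs]
  apply Real.sqrt_le_sqrt
  rw [dot_self_eq_sum_sq]
  exact Finset.single_le_sum (f := fun k => (x k)^2) (fun k _ => sq_nonneg _) (Finset.mem_univ a)

lemma abs_dot_le {n : Type*} [Fintype n] (x y : n → ℝ) :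
    |dot x y| ≤ Real.sqrt (dot x x) * Real.sqrt (dot y y) := by
  have h := dot_cs x y
  have h1 : |dot x y| = Real.sqrt ((dot x y)^2) := (Real.sqrt_sq_eq_abs _).symm
  rw [h1, ← Real.sqrt_mul (dot_self_nonneg x)]
  exact Real.sqrt_le_sqrt h




/-- orthonormal family -/
def Orthonormal' {m n : Type*} [Fintype n] [DecidableEq m] (u : m → n → ℝ) : Prop :=
  ∀ i j, dot (u i) (u j) = if i = j then (1:ℝ) else 0

lemma orthonormal_comp {m m' n : Type*} [Fintype n] [DecidableEq m] [DecidableEq m'] {u : m → n → ℝ}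
    (hu : Orthonormal' u) (ι : m' → m) (hι : Function.Injective ι) :
    Orthonormal' (fun j => u (ι j)) := by
  intro i j
  rw [hu (ι i) (ι j)]
  by_cases h : i = j
  · simp [h]
  · have : ι i ≠ ι j := fun he => h (hι he)
    simp [h, this]

/-- coefficient of combo -/
lemma dot_combo {m n : Type*} [Fintype m] [Fintype n] [DecidableEq m] {u : m → n → ℝ}
    (hu : Orthonormal' u) (c : m → ℝ) (j : m) :
    dot (u j) (fun a => ∑ k, c k * u k a) = c j := by
  unfold dot
  have : ∀ a ∈ (Finset.univ : Finset n), u j a * ∑ k, c k * u k a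
      = ∑ k, c k * (u j a * u k a) := by
    intro a _; rw [Finset.mul_sum]; exact Finset.sum_congr rfl fun k _ => by ring
  rw [Finset.sum_congr rfl this, Finset.sum_comm]
  have : ∀ k ∈ (Finset.univ : Finset m), (∑ a, c k * (u j a * u k a))
      = c k * dot (u j) (u k) := by
    intro k _; unfold dot; rw [Finset.mul_sum]
  rw [Finset.sum_congr rfl this]
  have : ∀ k ∈ (Finset.univ : Finset m), c k * dot (u j) (u k)
      = if j = k then c k else 0 := by
    intro k _; rw [hu j k]; by_cases h : j = k <;> simp [h]
  rw [Finset.sum_congr rfl this, Finset.sum_ite_eq]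
  simp

/-- dot of two combos -/
lemma dot_combo_combo {m n : Type*} [Fintype m] [Fintype n] [DecidableEq m] {u : m → n → ℝ}
    (hu : Orthonormal' u) (c e : m → ℝ) :
    dot (fun a => ∑ k, c k * u k a) (fun a => ∑ k, e k * u k a) = ∑ k, c k * e k := by
  unfold dot
  have h1 : ∀ a ∈ (Finset.univ : Finset n),
      (∑ k, c k * u k a) * (∑ l, e l * u l a) = ∑ k, c k * (u k a * ∑ l, e l * u l a) := by
    intro a _; rw [Finset.sum_mul]; exact Finset.sum_congr rfl fun k _ => by ring
  rw [Finset.sum_congr rfl h1, Finset.sum_comm]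
  refine Finset.sum_congr rfl fun k _ => ?_
  rw [← Finset.mul_sum]
  have := dot_combo hu e k
  unfold dot at this
  rw [this]

lemma norm_combo {m n : Type*} [Fintype m] [Fintype n] [DecidableEq m] {u : m → n → ℝ}
    (hu : Orthonormal' u) (c : m → ℝ) :
    dot (fun a => ∑ k, c k * u k a) (fun a => ∑ k, c k * u k a) = ∑ k, (c k)^2 := by
  rw [dot_combo_combo hu c c]
  exact Finset.sum_congr rfl fun k _ => (sq (c k)).symm


/-- Bessel inequality -/
lemma bessel {m n : Type*} [Fintype m] [Fintype n] [DecidableEq m] {u : m → n → ℝ}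
    (hu : Orthonormal' u) (x : n → ℝ) :
    ∑ k, (dot (u k) x)^2 ≤ dot x x := by
  set c : m → ℝ := fun k => dot (u k) x with hc
  set P : n → ℝ := fun a => ∑ k, c k * u k a with hP
  have hyy : 0 ≤ dot (fun a => x a - P a) (fun a => x a - P a) := dot_self_nonneg _
  have h1 : dot (fun a => x a - P a) (fun a => x a - P a)
      = dot x x - dot x P - (dot P x - dot P P) := by
    rw [dot_sub_left x P (fun a => x a - P a), dot_sub_right x P x, dot_sub_right x P P]
  have hPP : dot P P = ∑ k, (c k)^2 := norm_combo hu c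
  have hxP : dot x P = ∑ k, (c k)^2 := by
    rw [hP]
    unfold dot
    have : ∀ a ∈ (Finset.univ : Finset n), x a * ∑ k, c k * u k a
        = ∑ k, c k * (u k a * x a) := by
      intro a _; rw [Finset.mul_sum]; exact Finset.sum_congr rfl fun k _ => by ring
    rw [Finset.sum_congr rfl this, Finset.sum_comm]
    refine Finset.sum_congr rfl fun k _ => ?_
    rw [← Finset.mul_sum]
    have : ∑ a, u k a * x a = c k := rfl
    rw [this, sq]
  have hPx : dot P x = ∑ k, (c k)^2 := by rw [dot_comm]; exact hxP
  rw [h1, hxP, hPx, hPP] at hyy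
  linarith

/-- rows orthonormal implies columns orthonormal (completeness) -/
lemma rows_complete {d : ℕ} {v : Fin d → Fin d → ℝ}
    (hv : Orthonormal' v) (a b : Fin d) :
    ∑ i, v i a * v i b = if a = b then (1:ℝ) else 0 := by
  set M : Matrix (Fin d) (Fin d) ℝ := Matrix.of (fun i k => v i k) with hM
  have h1 : M * Mᵀ = 1 := by
    ext i j
    have := hv i j
    unfold dot at this
    simp only [Matrix.mul_apply, Matrix.transpose_apply, hM, Matrix.of_apply]
    rw [this]
    by_cases h : i = j <;> simp [h, Matrix.one_apply]
  have h2 : Mᵀ * M = 1 := mul_eq_one_comm.mp h1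
  have := congrFun (congrFun h2 a) b
  simp only [Matrix.mul_apply, Matrix.transpose_apply, hM, Matrix.of_apply,
    Matrix.one_apply] at this
  rw [← this]

/-- Parseval for a full orthonormal basis -/
lemma parseval {d : ℕ} {v : Fin d → Fin d → ℝ}
    (hv : Orthonormal' v) (x : Fin d → ℝ) :
    ∑ i, (dot (v i) x)^2 = dot x x := by
  unfold dot
  have h1 : ∀ i ∈ (Finset.univ : Finset (Fin d)), (∑ k, v i k * x k)^2
      = ∑ a, ∑ b, (x a * x b) * (v i a * v i b) := by
    intro i _
    rw [sq, Finset.sum_mul_sum]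
    refine Finset.sum_congr rfl fun a _ => Finset.sum_congr rfl fun b _ => by ring
  rw [Finset.sum_congr rfl h1, Finset.sum_comm]
  have h2 : ∀ a ∈ (Finset.univ : Finset (Fin d)),
      (∑ i, ∑ b, (x a * x b) * (v i a * v i b)) = x a * x a := by
    intro a _
    rw [Finset.sum_comm]
    have h3 : ∀ b ∈ (Finset.univ : Finset (Fin d)),
        (∑ i, (x a * x b) * (v i a * v i b)) = if a = b then x a * x b else 0 := by
      intro b _
      rw [← Finset.mul_sum, rows_complete hv a b]
      by_cases h : a = b <;> simp [h]
    rw [Finset.sum_congr rfl h3, Finset.sum_ite_eq]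
    simp
  rw [Finset.sum_congr rfl h2]

/-- completeness: expansion of x in the basis -/
lemma basis_expand {d : ℕ} {v : Fin d → Fin d → ℝ}
    (hv : Orthonormal' v) (x : Fin d → ℝ) (a : Fin d) :
    x a = ∑ i, dot (v i) x * v i a := by
  have h1 : ∀ i ∈ (Finset.univ : Finset (Fin d)), dot (v i) x * v i a
      = ∑ b, x b * (v i a * v i b) := by
    intro i _
    unfold dot
    rw [Finset.sum_mul]
    exact Finset.sum_congr rfl fun b _ => by ring
  rw [Finset.sum_congr rfl h1, Finset.sum_comm]
  have h2 : ∀ b ∈ (Finset.univ : Finset (Fin d)),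
      (∑ i, x b * (v i a * v i b)) = if a = b then x b else 0 := by
    intro b _
    rw [← Finset.mul_sum, rows_complete hv a b]
    by_cases h : a = b <;> simp [h]
  rw [Finset.sum_congr rfl h2, Finset.sum_ite_eq]
  simp

/-- sum over injection le -/
lemma sum_comp_le {α β : Type*} [Fintype α] [Fintype β] [DecidableEq β]
    (ι : α → β) (hι : Function.Injective ι) (f : β → ℝ) (hf : ∀ b, 0 ≤ f b) :
    ∑ a, f (ι a) ≤ ∑ b, f b := by
  rw [← Finset.sum_image (f := f) (g := ι) (fun x _ y _ h => hι h)]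
  exact Finset.sum_le_sum_of_subset_of_nonneg (Finset.subset_univ _) fun b _ _ => hf b

/-- if f vanishes off the image, total sum equals sum over the injection -/
lemma sum_comp_eq {α β : Type*} [Fintype α] [Fintype β] [DecidableEq β]
    (ι : α → β) (hι : Function.Injective ι) (f : β → ℝ)
    (hf : ∀ b, (∀ a, ι a ≠ b) → f b = 0) :
    ∑ b, f b = ∑ a, f (ι a) := by
  rw [← Finset.sum_image (f := f) (g := ι) (fun x _ y _ h => hι h)]
  symm
  apply Finset.sum_subset (Finset.subset_univ _)
  intro b _ hb
  apply hf
  intro a ha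
  exact hb (Finset.mem_image.mpr ⟨a, Finset.mem_univ a, ha⟩)

/-- kernel trick: more vectors than constraints -/
lemma exists_combo {d m n : ℕ} (hnm : n < m) (u : Fin m → Fin d → ℝ) (y : Fin n → Fin d → ℝ) :
    ∃ c : Fin m → ℝ, c ≠ 0 ∧ ∀ k, dot (y k) (fun a => ∑ j, c j * u j a) = 0 := by
  set A : Matrix (Fin n) (Fin m) ℝ := Matrix.of fun k j => dot (y k) (u j) with hA
  by_cases hker : ∃ c : Fin m → ℝ, c ≠ 0 ∧ A.mulVec c = 0
  · obtain ⟨c, hc, hc0⟩ := hker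
    refine ⟨c, hc, fun k => ?_⟩
    have h1 : dot (y k) (fun a => ∑ j, c j * u j a) = ∑ j, A k j * c j := by
      unfold dot
      have : ∀ a ∈ (Finset.univ : Finset (Fin d)), y k a * ∑ j, c j * u j a
          = ∑ j, c j * (y k a * u j a) := by
        intro a _; rw [Finset.mul_sum]; exact Finset.sum_congr rfl fun j _ => by ring
      rw [Finset.sum_congr rfl this, Finset.sum_comm]
      refine Finset.sum_congr rfl fun j _ => ?_
      rw [← Finset.mul_sum]
      simp only [hA, Matrix.of_apply]
      unfold dot
      ring
    rw [h1]
    have := congrFun hc0 k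
    simpa [Matrix.mulVec, dotProduct] using this
  · exfalso
    push_neg at hker
    have hinj : Function.Injective A.mulVecLin := by
      rw [← LinearMap.ker_eq_bot, LinearMap.ker_eq_bot']
      intro c hc
      by_contra hc0
      exact hker c hc0 (by simpa using hc)
    have := LinearMap.finrank_le_finrank_of_injective hinj
    rw [Module.finrank_fin_fun, Module.finrank_fin_fun] at this
    omega



lemma vec2Norm_eq {n : Type*} [Fintype n] (x : n → ℝ) :
    vec2Norm x = Real.sqrt (dot x x) := by
  rw [vec2Norm, dot_self_eq_sum_sq]

lemma vec2Norm_nonneg {n : Type*} [Fintype n] (x : n → ℝ) : 0 ≤ vec2Norm x :=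
  Real.sqrt_nonneg _

lemma vec2Norm_smul {n : Type*} [Fintype n] (c : ℝ) (x : n → ℝ) :
    vec2Norm (c • x) = |c| * vec2Norm x := by
  unfold vec2Norm
  have : ∀ i ∈ (Finset.univ : Finset n), ((c • x) i)^2 = c^2 * (x i)^2 := by
    intro i _; simp [mul_pow]
  rw [Finset.sum_congr rfl this, ← Finset.mul_sum, Real.sqrt_mul (sq_nonneg c),
    Real.sqrt_sq_eq_abs]

lemma vec2Norm_eq_zero {n : Type*} [Fintype n] {x : n → ℝ} (h : vec2Norm x = 0) :
    x = 0 := by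
  unfold vec2Norm at h
  have h2 : ∑ i, (x i)^2 = 0 := by
    have h' : (∑ i, (x i)^2) ≤ 0 := Real.sqrt_eq_zero'.mp h
    exact le_antisymm h' (Finset.sum_nonneg fun i _ => sq_nonneg _)
  funext i
  have := (Finset.sum_eq_zero_iff_of_nonneg (fun i _ => sq_nonneg (x i))).mp h2 i
    (Finset.mem_univ i)
  exact pow_eq_zero_iff (by norm_num) |>.mp this

lemma specnorm_mulVec {m n : Type*} [Fintype m] [Fintype n] (M : Matrix m n ℝ) {C : ℝ}
    (hC : matSpecNorm M ≤ C) (x : n → ℝ) :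
    vec2Norm (M.mulVec x) ≤ C * vec2Norm x := by
  set S := {c : ℝ | ∃ x : n → ℝ, vec2Norm x ≤ 1 ∧ c = vec2Norm (M.mulVec x)} with hS
  have hbdd : BddAbove S := by
    refine ⟨Real.sqrt (∑ i, ∑ j, (M i j)^2), fun c hc => ?_⟩
    obtain ⟨z, hz1, rfl⟩ := hc
    rw [vec2Norm]
    apply Real.sqrt_le_sqrt
    have hz2 : ∑ j, (z j)^2 ≤ 1 := by
      have h0 : 0 ≤ ∑ j, (z j)^2 := Finset.sum_nonneg fun j _ => sq_nonneg _
      rw [vec2Norm] at hz1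
      nlinarith [Real.sq_sqrt h0, Real.sqrt_nonneg (∑ j, (z j)^2)]
    calc ∑ i, ((M.mulVec z) i)^2
        ≤ ∑ i, (∑ j, (M i j)^2) * (∑ j, (z j)^2) := by
          apply Finset.sum_le_sum
          intro i _
          rw [Matrix.mulVec, dotProduct]
          exact Finset.sum_mul_sq_le_sq_mul_sq _ _ _
      _ ≤ ∑ i, ∑ j, (M i j)^2 := by
          apply Finset.sum_le_sum
          intro i _
          have h1 : 0 ≤ ∑ j, (M i j)^2 := Finset.sum_nonneg fun j _ => sq_nonneg _
          nlinarith
  have hmem : ∀ z : n → ℝ, vec2Norm z ≤ 1 → vec2Norm (M.mulVec z) ≤ C := by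
    intro z hz
    refine le_trans (le_trans (le_csSup hbdd ⟨z, hz, rfl⟩) ?_) hC
    rw [matSpecNorm]
  by_cases ht : vec2Norm x = 0
  · have : x = 0 := vec2Norm_eq_zero ht
    subst this
    rw [Matrix.mulVec_zero, ht]
    have : vec2Norm (0 : m → ℝ) = 0 := by
      simp [vec2Norm]
    rw [this, mul_zero]
  · have ht0 : 0 < vec2Norm x := lt_of_le_of_ne (vec2Norm_nonneg x) (Ne.symm ht)
    set t := vec2Norm x
    have hy : vec2Norm (t⁻¹ • x) = 1 := by
      rw [vec2Norm_smul, abs_of_pos (inv_pos.mpr ht0), inv_mul_cancel₀ (ne_of_gt ht0)]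
    have h2 := hmem (t⁻¹ • x) (le_of_eq hy)
    rw [Matrix.mulVec_smul, vec2Norm_smul, abs_of_pos (inv_pos.mpr ht0)] at h2
    calc vec2Norm (M.mulVec x) = t * (t⁻¹ * vec2Norm (M.mulVec x)) := by
          field_simp
      _ ≤ t * C := by
          exact mul_le_mul_of_nonneg_left h2 (le_of_lt ht0)
      _ = C * t := mul_comm _ _

lemma quad_specnorm {n : Type*} [Fintype n] (M : Matrix n n ℝ) {C : ℝ}
    (hC : matSpecNorm M ≤ C) (x : n → ℝ) :
    |dot x (M.mulVec x)| ≤ C * dot x x := by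
  have h1 := abs_dot_le x (M.mulVec x)
  have h2 := specnorm_mulVec M hC x
  rw [vec2Norm_eq, vec2Norm_eq] at h2
  have h3 : Real.sqrt (dot x x) * Real.sqrt (dot (M.mulVec x) (M.mulVec x))
      ≤ Real.sqrt (dot x x) * (C * Real.sqrt (dot x x)) :=
    mul_le_mul_of_nonneg_left h2 (Real.sqrt_nonneg _)
  have h4 : Real.sqrt (dot x x) * (C * Real.sqrt (dot x x)) = C * dot x x := by
    rw [← mul_assoc, mul_comm (Real.sqrt (dot x x)) C, mul_assoc,
      Real.mul_self_sqrt (dot_self_nonneg x)]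
  linarith [h1, h3, h4 ▸ h3]

lemma entry_mulVec_bound {n : Type*} [Fintype n] (M : Matrix n n ℝ) {C : ℝ}
    (hC : matSpecNorm M ≤ C) (x : n → ℝ) (a : n) :
    |(M.mulVec x) a| ≤ C * vec2Norm x := by
  refine le_trans (abs_entry_le_sqrt_dot _ a) ?_
  rw [← vec2Norm_eq]
  exact specnorm_mulVec M hC x

lemma psd_quad_nonneg {n : Type*} [Fintype n] {M : Matrix n n ℝ}
    (hM : M.PosSemidef) (x : n → ℝ) : 0 ≤ dot x (M.mulVec x) := by
  have := hM.dotProduct_mulVec_nonneg x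
  simpa [dot, dotProduct] using this

section QuadForms
variable {d : ℕ}

/-- expansion of M.mulVec x in eigenbasis -/
lemma mulVec_eigen_expand {M : Matrix (Fin d) (Fin d) ℝ} {lam : Fin d → ℝ}
    {v : Fin d → Fin d → ℝ} (heig : ∀ i, M.mulVec (v i) = lam i • v i)
    (hv : Orthonormal' v) (x : Fin d → ℝ) (a : Fin d) :
    (M.mulVec x) a = ∑ i, lam i * dot (v i) x * v i a := by
  have h1 : (M.mulVec x) a = ∑ b, M a b * x b := rfl
  rw [h1]
  have h2 : ∀ b ∈ (Finset.univ : Finset (Fin d)), M a b * x b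
      = ∑ i, dot (v i) x * (M a b * v i b) := by
    intro b _
    conv_lhs => rw [basis_expand hv x b]
    rw [Finset.mul_sum]
    exact Finset.sum_congr rfl fun i _ => by ring
  rw [Finset.sum_congr rfl h2, Finset.sum_comm]
  refine Finset.sum_congr rfl fun i _ => ?_
  rw [← Finset.mul_sum]
  have h3 : ∑ b, M a b * v i b = (M.mulVec (v i)) a := rfl
  rw [h3, heig i]
  simp only [Pi.smul_apply, smul_eq_mul]
  ring

lemma quad_eigen {M : Matrix (Fin d) (Fin d) ℝ} {lam : Fin d → ℝ}
    {v : Fin d → Fin d → ℝ} (heig : ∀ i, M.mulVec (v i) = lam i • v i)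
    (hv : Orthonormal' v) (x : Fin d → ℝ) :
    dot x (M.mulVec x) = ∑ i, lam i * (dot (v i) x)^2 := by
  unfold dot
  have h1 : ∀ a ∈ (Finset.univ : Finset (Fin d)), x a * (M.mulVec x) a
      = ∑ i, (lam i * dot (v i) x) * (v i a * x a) := by
    intro a _
    rw [mulVec_eigen_expand heig hv x a, Finset.mul_sum]
    exact Finset.sum_congr rfl fun i _ => by ring
  rw [Finset.sum_congr rfl h1, Finset.sum_comm]
  refine Finset.sum_congr rfl fun i _ => ?_
  rw [← Finset.mul_sum]
  have h2 : ∑ a, v i a * x a = dot (v i) x := rfl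
  rw [h2]
  ring

/-- entries of M from eigendecomposition -/
lemma entries_eigen {M : Matrix (Fin d) (Fin d) ℝ} {lam : Fin d → ℝ}
    {v : Fin d → Fin d → ℝ} (heig : ∀ i, M.mulVec (v i) = lam i • v i)
    (hv : Orthonormal' v) (a b : Fin d) :
    M a b = ∑ i, lam i * v i a * v i b := by
  have h1 : M a b = ∑ c, M a c * (if c = b then (1:ℝ) else 0) := by
    simp
  rw [h1]
  have h2 : ∀ c ∈ (Finset.univ : Finset (Fin d)), M a c * (if c = b then (1:ℝ) else 0)
      = ∑ i, (v i b) * (M a c * v i c) := by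
    intro c _
    have hcb := rows_complete hv c b
    have : (if c = b then (1:ℝ) else 0) = ∑ i, v i c * v i b := hcb.symm
    rw [this, Finset.mul_sum]
    exact Finset.sum_congr rfl fun i _ => by ring
  rw [Finset.sum_congr rfl h2, Finset.sum_comm]
  refine Finset.sum_congr rfl fun i _ => ?_
  rw [← Finset.mul_sum]
  have h3 : ∑ c, M a c * v i c = (M.mulVec (v i)) a := rfl
  rw [h3, heig i]
  simp only [Pi.smul_apply, smul_eq_mul]
  ring

/-- quadratic form of B * Bᵀ -/
lemma quad_BBt {r : ℕ} (B : Matrix (Fin d) (Fin r) ℝ) (x : Fin d → ℝ) :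
    dot x ((B * Bᵀ).mulVec x) = ∑ k, (∑ a, B a k * x a)^2 := by
  unfold dot
  have key : ∀ a ∈ (Finset.univ : Finset (Fin d)), x a * ((B * Bᵀ).mulVec x) a
      = ∑ k, ∑ b, (B a k * x a) * (B b k * x b) := by
    intro a _
    have h2 : ((B * Bᵀ).mulVec x) a = ∑ b, (∑ k, B a k * B b k) * x b := by
      simp [Matrix.mulVec, dotProduct, Matrix.mul_apply]
    rw [h2, Finset.mul_sum]
    have h3 : ∀ b ∈ (Finset.univ : Finset (Fin d)),
        x a * ((∑ k, B a k * B b k) * x b) = ∑ k, (B a k * x a) * (B b k * x b) := by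
      intro b _
      rw [Finset.sum_mul, Finset.mul_sum]
      exact Finset.sum_congr rfl fun k _ => by ring
    rw [Finset.sum_congr rfl h3, Finset.sum_comm]
  rw [Finset.sum_congr rfl key, Finset.sum_comm]
  refine Finset.sum_congr rfl fun k _ => ?_
  rw [sq, Finset.sum_mul_sum]

/-- mulVec of a matrix given by a spectral representation -/
lemma rep_mulVec {r : ℕ} {M : Matrix (Fin d) (Fin d) ℝ} {lamb : Fin r → ℝ}
    {w : Fin r → Fin d → ℝ}
    (hrep : ∀ a b, M a b = ∑ k, lamb k * w k a * w k b) (x : Fin d → ℝ) (a : Fin d) :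
    (M.mulVec x) a = ∑ k, lamb k * dot (w k) x * w k a := by
  have h1 : (M.mulVec x) a = ∑ b, M a b * x b := rfl
  rw [h1]
  have h2 : ∀ b ∈ (Finset.univ : Finset (Fin d)), M a b * x b
      = ∑ k, (lamb k * w k a) * (w k b * x b) := by
    intro b _
    rw [hrep a b, Finset.sum_mul]
    exact Finset.sum_congr rfl fun k _ => by ring
  rw [Finset.sum_congr rfl h2, Finset.sum_comm]
  refine Finset.sum_congr rfl fun k _ => ?_
  rw [← Finset.mul_sum]
  have h3 : ∑ b, w k b * x b = dot (w k) x := rfl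
  rw [h3]
  ring

lemma rep_quad {r : ℕ} {M : Matrix (Fin d) (Fin d) ℝ} {lamb : Fin r → ℝ}
    {w : Fin r → Fin d → ℝ}
    (hrep : ∀ a b, M a b = ∑ k, lamb k * w k a * w k b) (x : Fin d → ℝ) :
    dot x (M.mulVec x) = ∑ k, lamb k * (dot (w k) x)^2 := by
  unfold dot
  have h1 : ∀ a ∈ (Finset.univ : Finset (Fin d)), x a * (M.mulVec x) a
      = ∑ k, (lamb k * dot (w k) x) * (w k a * x a) := by
    intro a _
    rw [rep_mulVec hrep x a, Finset.mul_sum]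
    exact Finset.sum_congr rfl fun k _ => by ring
  rw [Finset.sum_congr rfl h1, Finset.sum_comm]
  refine Finset.sum_congr rfl fun k _ => ?_
  rw [← Finset.mul_sum]
  have h2 : ∑ a, w k a * x a = dot (w k) x := rfl
  rw [h2]
  ring

lemma rep_eigen {r : ℕ} {M : Matrix (Fin d) (Fin d) ℝ} {lamb : Fin r → ℝ}
    {w : Fin r → Fin d → ℝ} (hw : Orthonormal' w)
    (hrep : ∀ a b, M a b = ∑ k, lamb k * w k a * w k b) (j : Fin r) (a : Fin d) :
    (M.mulVec (w j)) a = lamb j * w j a := by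
  rw [rep_mulVec hrep (w j) a]
  have h1 : ∀ k ∈ (Finset.univ : Finset (Fin r)), lamb k * dot (w k) (w j) * w k a
      = if j = k then lamb k * w k a else 0 := by
    intro k _
    rw [hw k j]
    by_cases h : k = j
    · subst h; simp
    · have : ¬ (j = k) := fun he => h he.symm
      simp [h, this]
  rw [Finset.sum_congr rfl h1, Finset.sum_ite_eq]
  simp

end QuadForms

lemma dot_add_right {n : Type*} [Fintype n] (z x y : n → ℝ) :
    dot z (fun a => x a + y a) = dot z x + dot z y := by
  unfold dot; rw [← Finset.sum_add_distrib]; exact Finset.sum_congr rfl fun k _ => by ring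

lemma dot_perp_combo {m n : Type*} [Fintype m] [Fintype n] {u : m → n → ℝ} {z : n → ℝ}
    (h : ∀ j, dot z (u j) = 0) (c : m → ℝ) :
    dot z (fun a => ∑ j, c j * u j a) = 0 := by
  unfold dot
  have h1 : ∀ a ∈ (Finset.univ : Finset n), z a * ∑ j, c j * u j a
      = ∑ j, c j * (z a * u j a) := by
    intro a _; rw [Finset.mul_sum]; exact Finset.sum_congr rfl fun j _ => by ring
  rw [Finset.sum_congr rfl h1, Finset.sum_comm]
  apply Finset.sum_eq_zero
  intro j _
  rw [← Finset.mul_sum]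
  have := h j
  unfold dot at this
  rw [this, mul_zero]

lemma dot_smul_self {n : Type*} [Fintype n] (t : ℝ) (x : n → ℝ) :
    dot x (t • x) = t * dot x x := by
  unfold dot
  rw [Finset.mul_sum]
  exact Finset.sum_congr rfl fun k _ => by simp [smul_eq_mul]; ring

lemma le_fin_ciSup {α : Type*} [Fintype α] [Nonempty α] (f : α → ℝ) (i : α) :
    f i ≤ ⨆ j, f j :=
  le_ciSup (Set.Finite.bddAbove (Set.finite_range f)) i

lemma psd_diag_nonneg {n : Type*} [Fintype n] [DecidableEq n] {M : Matrix n n ℝ}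
    (hM : M.PosSemidef) (a : n) : 0 ≤ M a a := by
  have h := psd_quad_nonneg hM (fun i => if i = a then (1:ℝ) else 0)
  have h1 : dot (fun i => if i = a then (1:ℝ) else 0)
      (M.mulVec (fun i => if i = a then (1:ℝ) else 0)) = M a a := by
    unfold dot
    rw [Finset.sum_eq_single a]
    · simp [Matrix.mulVec, dotProduct]
    · intro b _ hb; simp [hb]
    · intro hh; exact absurd (Finset.mem_univ a) hh
  rwa [h1] at h

lemma exists_ne_zero_of_ne_zero {m : Type*} [Fintype m] {c : m → ℝ} (hc : c ≠ 0) :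
    ∃ j, c j ≠ 0 := by
  by_contra h
  push_neg at h
  exact hc (funext fun j => h j)

lemma sum_sq_pos_of_ne_zero {m : Type*} [Fintype m] {c : m → ℝ} (hc : c ≠ 0) :
    0 < ∑ j, (c j)^2 := by
  obtain ⟨j, hj⟩ := exists_ne_zero_of_ne_zero hc
  have h1 : 0 < (c j)^2 := by positivity
  exact lt_of_lt_of_le h1 (Finset.single_le_sum (f := fun k => (c k)^2)
    (fun k _ => sq_nonneg _) (Finset.mem_univ j))

lemma BBt_mulVec {d r : ℕ} (B : Matrix (Fin d) (Fin r) ℝ) (x : Fin d → ℝ) (a : Fin d) :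
    ((B * Bᵀ).mulVec x) a = ∑ m, B a m * (∑ b, B b m * x b) := by
  have h1 : ((B * Bᵀ).mulVec x) a = ∑ b, (∑ m, B a m * B b m) * x b := by
    simp [Matrix.mulVec, dotProduct, Matrix.mul_apply]
  rw [h1]
  have h2 : ∀ b ∈ (Finset.univ : Finset (Fin d)), (∑ m, B a m * B b m) * x b
      = ∑ m, B a m * (B b m * x b) := by
    intro b _; rw [Finset.sum_mul]; exact Finset.sum_congr rfl fun m _ => by ring
  rw [Finset.sum_congr rfl h2, Finset.sum_comm]
  exact Finset.sum_congr rfl fun m _ => by rw [← Finset.mul_sum]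

lemma abs_le_one_of_unit {n : Type*} [Fintype n] {x y : n → ℝ}
    (hx : dot x x = 1) (hy : dot y y = 1) : |dot x y| ≤ 1 := by
  have := abs_dot_le x y
  rwa [hx, hy, Real.sqrt_one, mul_one] at this

end PV

open PV Finset

/-- Pervasiveness of factors is equivalent to incoherence of leading eigenvectors together
with spiked eigenvalues (Proposition 3.2 of Fan–Wang–Zhong). -/
theorem pervasiveness_iff_incoherence
    (C₀ : ℝ) (hC₀ : 0 < C₀) (r : ℕ) (hr : 0 < r) (C₁ : ℝ) (hC₁ : 0 < C₁) :
    -- part (i): pervasiveness implies incoherence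
    (∃ C₂ : ℝ, 0 < C₂ ∧
      ∀ (d : ℕ) (hrd : r ≤ d) (B : Matrix (Fin d) (Fin r) ℝ)
        (Su : Matrix (Fin d) (Fin d) ℝ), Su.PosSemidef → matSpecNorm Su ≤ C₀ →
      ∀ (lam : Fin d → ℝ) (v : Fin d → Fin d → ℝ),
        (∀ i, (B * Bᵀ + Su).mulVec (v i) = lam i • v i) →
        (∀ i j, ∑ k, v i k * v j k = if i = j then (1 : ℝ) else 0) →
        (∀ i j : Fin d, i ≤ j → lam j ≤ lam i) →
      ∀ (lamb : Fin r → ℝ) (w : Fin r → Fin d → ℝ),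
        (∀ i j, ∑ k, w i k * w j k = if i = j then (1 : ℝ) else 0) →
        (∀ i j : Fin r, i ≤ j → lamb j ≤ lamb i) →
        (∀ a b, (B * Bᵀ) a b = ∑ i, lamb i * w i a * w i b) →
        matMaxNorm B ≤ C₁ →
        (d : ℝ) / C₁ ≤ lamb ⟨r - 1, by omega⟩ →
        (∀ i : Fin r, (d : ℝ) / C₁ ≤
          lamb i - (if h : (i : ℕ) + 1 < r then lamb ⟨(i : ℕ) + 1, h⟩ else 0)) →
        C₂ ≤ (d : ℝ) →
        (∀ i : Fin r, vecSupNorm (v (Fin.castLE hrd i)) ≤ C₂ / Real.sqrt d) ∧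
        matCoherence (Matrix.of fun a (k : Fin r) => v (Fin.castLE hrd k) a) ≤
          (r : ℝ) * C₂ ^ 2 ∧
        (∀ i : Fin r, |lam (Fin.castLE hrd i) - lamb i| ≤ C₀))
    ∧
    -- part (ii): incoherence (with spiked eigenvalues) implies pervasiveness
    (∃ C₂ : ℝ, 0 < C₂ ∧
      ∀ (d : ℕ) (hrd : r ≤ d) (B : Matrix (Fin d) (Fin r) ℝ)
        (Su : Matrix (Fin d) (Fin d) ℝ), Su.PosSemidef → matSpecNorm Su ≤ C₀ →
      ∀ (lam : Fin d → ℝ) (v : Fin d → Fin d → ℝ),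
        (∀ i, (B * Bᵀ + Su).mulVec (v i) = lam i • v i) →
        (∀ i j, ∑ k, v i k * v j k = if i = j then (1 : ℝ) else 0) →
        (∀ i j : Fin d, i ≤ j → lam j ≤ lam i) →
        matCoherence (Matrix.of fun a (k : Fin r) => v (Fin.castLE hrd k) a) ≤ C₁ →
        (d : ℝ) / C₁ ≤ lam (Fin.castLE hrd ⟨r - 1, by omega⟩) →
        lam ⟨0, by omega⟩ ≤ C₁ * (d : ℝ) →
        matMaxNorm B ≤ C₂) := by
  constructor
  · refine ⟨(r:ℝ)^2 * C₁^3 + C₀ * C₁ + 1, by positivity, ?_⟩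
    set C₂ : ℝ := (r:ℝ)^2 * C₁^3 + C₀ * C₁ + 1 with hC₂def
    intro d hrd B Su hSuPSD hSuNorm lam v heig hvorth hlamSorted lamb w hworth hlambSorted
      hBB hBmax hlambr hgap hd2
    have hd0 : 0 < d := lt_of_lt_of_le hr hrd
    haveI : Nonempty (Fin d) := ⟨⟨0, hd0⟩⟩
    haveI : Nonempty (Fin r) := ⟨⟨0, hr⟩⟩
    have hdR : (0:ℝ) < (d:ℕ) := by exact_mod_cast hd0
    have hrR : (0:ℝ) < (r:ℕ) := by exact_mod_cast hr
    have hdR1 : (1:ℝ) ≤ (d:ℕ) := by exact_mod_cast hd0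
    have hrR1 : (1:ℝ) ≤ (r:ℕ) := by exact_mod_cast hr
    have hv : Orthonormal' v := hvorth
    have hw : Orthonormal' w := hworth
    have heig' : ∀ i, (B * Bᵀ + Su).mulVec (v i) = lam i • v i := heig
    have hlambLow : ∀ k : Fin r, (d:ℝ)/C₁ ≤ lamb k := by
      intro k
      refine le_trans hlambr (hlambSorted k ⟨r-1, by omega⟩ ?_)
      simp only [Fin.le_def]
      have := k.isLt
      omega
    have hlambPos : ∀ k : Fin r, 0 ≤ lamb k := fun k => le_trans (by positivity) (hlambLow k)
    have hBentry : ∀ (a : Fin d) (k : Fin r), |B a k| ≤ C₁ := by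
      intro a k
      refine le_trans ?_ hBmax
      rw [matMaxNorm]
      exact le_trans (le_fin_ciSup (fun j => |B a j|) k)
        (le_fin_ciSup (fun i => ⨆ j, |B i j|) a)
    have hcol : ∀ (m k : Fin r), |∑ b, B b m * w k b| ≤ C₁ * Real.sqrt d := by
      intro m k
      have h1 : (∑ b, B b m * w k b)^2 ≤ (∑ b, (B b m)^2) * (∑ b, (w k b)^2) :=
        Finset.sum_mul_sq_le_sq_mul_sq _ _ _
      have h2 : ∑ b, (w k b)^2 = 1 := by
        have hkk := hworth k k
        simp at hkk
        rw [← hkk]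
        exact Finset.sum_congr rfl fun b _ => sq (w k b)
      have h3 : ∑ b, (B b m)^2 ≤ (d:ℝ) * C₁^2 := by
        calc ∑ b, (B b m)^2 ≤ ∑ _b : Fin d, C₁^2 := by
              apply Finset.sum_le_sum
              intro b _
              have hb := hBentry b m
              have hsq := mul_self_le_mul_self (abs_nonneg (B b m)) hb
              nlinarith [sq_abs (B b m)]
          _ = (d:ℝ) * C₁^2 := by
              rw [Finset.sum_const, Finset.card_univ, Fintype.card_fin, nsmul_eq_mul]
      have h4 : (∑ b, B b m * w k b)^2 ≤ (d:ℝ) * C₁^2 := by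
        rw [h2, mul_one] at h1
        linarith
      calc |∑ b, B b m * w k b| = Real.sqrt ((∑ b, B b m * w k b)^2) :=
            (Real.sqrt_sq_eq_abs _).symm
        _ ≤ Real.sqrt ((d:ℝ) * C₁^2) := Real.sqrt_le_sqrt h4
        _ = C₁ * Real.sqrt d := by
            rw [Real.sqrt_mul (le_of_lt hdR), Real.sqrt_sq (le_of_lt hC₁), mul_comm]
    have hwent : ∀ (k : Fin r) (a : Fin d), lamb k * |w k a| ≤ (r:ℝ) * C₁^2 * Real.sqrt d := by
      intro k a
      have h1 : lamb k * w k a = ∑ m, B a m * (∑ b, B b m * w k b) := by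
        rw [← rep_eigen hw hBB k a, BBt_mulVec]
      have h2 : |lamb k * w k a| ≤ ∑ _m : Fin r, C₁ * (C₁ * Real.sqrt d) := by
        rw [h1]
        refine le_trans (Finset.abs_sum_le_sum_abs _ _) (Finset.sum_le_sum ?_)
        intro m _
        rw [abs_mul]
        exact mul_le_mul (hBentry a m) (hcol m k) (abs_nonneg _) (le_of_lt hC₁)
      have h3 : ∑ _m : Fin r, C₁ * (C₁ * Real.sqrt d) = (r:ℝ) * C₁^2 * Real.sqrt d := by
        rw [Finset.sum_const, Finset.card_univ, Fintype.card_fin, nsmul_eq_mul]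
        ring
      rw [h3] at h2
      calc lamb k * |w k a| = |lamb k * w k a| := by
            rw [abs_mul, abs_of_nonneg (hlambPos k)]
        _ ≤ _ := h2
    -- Weyl part 1 : lamb i ≤ lam i
    have W1 : ∀ i : Fin r, lamb i ≤ lam (Fin.castLE hrd i) := by
      intro i
      have h2 : (i:ℕ) + 1 ≤ r := i.isLt
      have h3 : (i:ℕ) ≤ d := by have := i.isLt; omega
      obtain ⟨c, hc, hperp⟩ := exists_combo (d := d) (Nat.lt_succ_self (i:ℕ))
        (fun j a => w (Fin.castLE h2 j) a) (fun k a => v (Fin.castLE h3 k) a)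
      have hιinj : Function.Injective (Fin.castLE h2 : Fin ((i:ℕ)+1) → Fin r) :=
        Fin.castLE_injective _
      have huorth : Orthonormal' (fun j : Fin ((i:ℕ)+1) => w (Fin.castLE h2 j)) :=
        orthonormal_comp hw _ hιinj
      have hs : 0 < ∑ j, (c j)^2 := sum_sq_pos_of_ne_zero hc
      have hXX : dot (fun a => ∑ j, c j * w (Fin.castLE h2 j) a)
          (fun a => ∑ j, c j * w (Fin.castLE h2 j) a) = ∑ j, (c j)^2 := norm_combo huorth c
      have hupp : dot (fun a => ∑ j, c j * w (Fin.castLE h2 j) a)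
          ((B * Bᵀ + Su).mulVec (fun a => ∑ j, c j * w (Fin.castLE h2 j) a))
          ≤ lam (Fin.castLE hrd i) * ∑ j, (c j)^2 := by
        rw [quad_eigen heig' hv]
        have hterm : ∀ p ∈ Finset.univ,
            lam p * (dot (v p) (fun a => ∑ j, c j * w (Fin.castLE h2 j) a))^2
            ≤ lam (Fin.castLE hrd i) *
              (dot (v p) (fun a => ∑ j, c j * w (Fin.castLE h2 j) a))^2 := by
          intro p _
          by_cases hp : (p : ℕ) < (i : ℕ)
          · have hz : dot (v p) (fun a => ∑ j, c j * w (Fin.castLE h2 j) a) = 0 :=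
              hperp ⟨(p:ℕ), hp⟩
            rw [hz]
            simp
          · have hle : lam p ≤ lam (Fin.castLE hrd i) :=
              hlamSorted (Fin.castLE hrd i) p (by simp only [Fin.le_def]; simp; omega)
            exact mul_le_mul_of_nonneg_right hle (sq_nonneg _)
        refine le_trans (Finset.sum_le_sum hterm) ?_
        rw [← Finset.mul_sum, parseval hv, hXX]
      have hlow : lamb i * ∑ j, (c j)^2
          ≤ dot (fun a => ∑ j, c j * w (Fin.castLE h2 j) a)
            ((B * Bᵀ + Su).mulVec (fun a => ∑ j, c j * w (Fin.castLE h2 j) a)) := by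
        have hadd : (B * Bᵀ + Su).mulVec (fun a => ∑ j, c j * w (Fin.castLE h2 j) a)
            = fun a => ((B * Bᵀ).mulVec (fun a => ∑ j, c j * w (Fin.castLE h2 j) a)) a
              + (Su.mulVec (fun a => ∑ j, c j * w (Fin.castLE h2 j) a)) a := by
          rw [Matrix.add_mulVec]
          rfl
        rw [hadd, dot_add_right]
        have hBpart : lamb i * ∑ j, (c j)^2 ≤
            dot (fun a => ∑ j, c j * w (Fin.castLE h2 j) a)
            ((B * Bᵀ).mulVec (fun a => ∑ j, c j * w (Fin.castLE h2 j) a)) := by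
          rw [rep_quad hBB]
          have hvan : ∀ k, (∀ j : Fin ((i:ℕ)+1), Fin.castLE h2 j ≠ k) →
              lamb k * (dot (w k) (fun a => ∑ j, c j * w (Fin.castLE h2 j) a))^2 = 0 := by
            intro k hk
            have hz : dot (w k) (fun a => ∑ j, c j * w (Fin.castLE h2 j) a) = 0 := by
              apply dot_perp_combo
              intro j
              rw [hw k (Fin.castLE h2 j)]
              simp [Ne.symm (hk j)]
            rw [hz]
            ring
          rw [sum_comp_eq (Fin.castLE h2) hιinj _ hvan]
          have hterm : ∀ j ∈ Finset.univ, lamb i * (c j)^2 ≤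
              lamb (Fin.castLE h2 j) * (dot (w (Fin.castLE h2 j))
                (fun a => ∑ j, c j * w (Fin.castLE h2 j) a))^2 := by
            intro j _
            rw [dot_combo huorth c j]
            refine mul_le_mul_of_nonneg_right
              (hlambSorted (Fin.castLE h2 j) i ?_) (sq_nonneg _)
            simp only [Fin.le_def]
            have := j.isLt
            simp
            omega
          calc lamb i * ∑ j, (c j)^2 = ∑ j, lamb i * (c j)^2 := Finset.mul_sum _ _ _
            _ ≤ _ := Finset.sum_le_sum hterm
        have hSpart : 0 ≤ dot (fun a => ∑ j, c j * w (Fin.castLE h2 j) a)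
            (Su.mulVec (fun a => ∑ j, c j * w (Fin.castLE h2 j) a)) :=
          psd_quad_nonneg hSuPSD _
        linarith
      have hfin := le_trans hlow hupp
      exact le_of_mul_le_mul_right (by linarith) hs
    -- Weyl part 2 : lam i ≤ lamb i + C₀
    have W2 : ∀ i : Fin r, lam (Fin.castLE hrd i) ≤ lamb i + C₀ := by
      intro i
      have h1 : (i:ℕ) + 1 ≤ d := by have := i.isLt; omega
      have h4 : (i:ℕ) ≤ r := le_of_lt i.isLt
      obtain ⟨c, hc, hperp⟩ := exists_combo (d := d) (Nat.lt_succ_self (i:ℕ))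
        (fun j a => v (Fin.castLE h1 j) a) (fun k a => w (Fin.castLE h4 k) a)
      have hιinj : Function.Injective (Fin.castLE h1 : Fin ((i:ℕ)+1) → Fin d) :=
        Fin.castLE_injective _
      have huorth : Orthonormal' (fun j : Fin ((i:ℕ)+1) => v (Fin.castLE h1 j)) :=
        orthonormal_comp hv _ hιinj
      have hs : 0 < ∑ j, (c j)^2 := sum_sq_pos_of_ne_zero hc
      have hXX : dot (fun a => ∑ j, c j * v (Fin.castLE h1 j) a)
          (fun a => ∑ j, c j * v (Fin.castLE h1 j) a) = ∑ j, (c j)^2 := norm_combo huorth c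
      have hlow : lam (Fin.castLE hrd i) * ∑ j, (c j)^2
          ≤ dot (fun a => ∑ j, c j * v (Fin.castLE h1 j) a)
            ((B * Bᵀ + Su).mulVec (fun a => ∑ j, c j * v (Fin.castLE h1 j) a)) := by
        rw [quad_eigen heig' hv]
        have hvan : ∀ p, (∀ j : Fin ((i:ℕ)+1), Fin.castLE h1 j ≠ p) →
            lam p * (dot (v p) (fun a => ∑ j, c j * v (Fin.castLE h1 j) a))^2 = 0 := by
          intro p hp
          have hz : dot (v p) (fun a => ∑ j, c j * v (Fin.castLE h1 j) a) = 0 := by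
            apply dot_perp_combo
            intro j
            rw [hv p (Fin.castLE h1 j)]
            simp [Ne.symm (hp j)]
          rw [hz]
          ring
        rw [sum_comp_eq (Fin.castLE h1) hιinj _ hvan]
        have hterm : ∀ j ∈ Finset.univ, lam (Fin.castLE hrd i) * (c j)^2 ≤
            lam (Fin.castLE h1 j) * (dot (v (Fin.castLE h1 j))
              (fun a => ∑ j, c j * v (Fin.castLE h1 j) a))^2 := by
          intro j _
          rw [dot_combo huorth c j]
          refine mul_le_mul_of_nonneg_right
            (hlamSorted (Fin.castLE h1 j) (Fin.castLE hrd i) ?_) (sq_nonneg _)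
          simp only [Fin.le_def]
          have := j.isLt
          simp
          omega
        calc lam (Fin.castLE hrd i) * ∑ j, (c j)^2
            = ∑ j, lam (Fin.castLE hrd i) * (c j)^2 := Finset.mul_sum _ _ _
          _ ≤ _ := Finset.sum_le_sum hterm
      have hupp : dot (fun a => ∑ j, c j * v (Fin.castLE h1 j) a)
          ((B * Bᵀ + Su).mulVec (fun a => ∑ j, c j * v (Fin.castLE h1 j) a))
          ≤ (lamb i + C₀) * ∑ j, (c j)^2 := by
        have hadd : (B * Bᵀ + Su).mulVec (fun a => ∑ j, c j * v (Fin.castLE h1 j) a)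
            = fun a => ((B * Bᵀ).mulVec (fun a => ∑ j, c j * v (Fin.castLE h1 j) a)) a
              + (Su.mulVec (fun a => ∑ j, c j * v (Fin.castLE h1 j) a)) a := by
          rw [Matrix.add_mulVec]
          rfl
        rw [hadd, dot_add_right]
        have hBpart : dot (fun a => ∑ j, c j * v (Fin.castLE h1 j) a)
            ((B * Bᵀ).mulVec (fun a => ∑ j, c j * v (Fin.castLE h1 j) a))
            ≤ lamb i * ∑ j, (c j)^2 := by
          rw [rep_quad hBB]
          have hterm : ∀ k ∈ Finset.univ,
              lamb k * (dot (w k) (fun a => ∑ j, c j * v (Fin.castLE h1 j) a))^2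
              ≤ lamb i * (dot (w k) (fun a => ∑ j, c j * v (Fin.castLE h1 j) a))^2 := by
            intro k _
            by_cases hk : (k:ℕ) < (i:ℕ)
            · have hz : dot (w k) (fun a => ∑ j, c j * v (Fin.castLE h1 j) a) = 0 :=
                hperp ⟨(k:ℕ), hk⟩
              rw [hz]
              simp
            · refine mul_le_mul_of_nonneg_right (hlambSorted i k ?_) (sq_nonneg _)
              simp only [Fin.le_def]
              omega
          refine le_trans (Finset.sum_le_sum hterm) ?_
          rw [← Finset.mul_sum]
          have hbes : ∑ k, (dot (w k) (fun a => ∑ j, c j * v (Fin.castLE h1 j) a))^2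
              ≤ dot (fun a => ∑ j, c j * v (Fin.castLE h1 j) a)
                (fun a => ∑ j, c j * v (Fin.castLE h1 j) a) := bessel hw _
          rw [hXX] at hbes
          exact mul_le_mul_of_nonneg_left hbes (hlambPos i)
        have hSpart : dot (fun a => ∑ j, c j * v (Fin.castLE h1 j) a)
            (Su.mulVec (fun a => ∑ j, c j * v (Fin.castLE h1 j) a)) ≤ C₀ * ∑ j, (c j)^2 := by
          have hq := quad_specnorm Su hSuNorm (fun a => ∑ j, c j * v (Fin.castLE h1 j) a)
          rw [hXX] at hq
          exact le_trans (le_abs_self _) hq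
        have hexp : (lamb i + C₀) * ∑ j, (c j)^2
            = lamb i * ∑ j, (c j)^2 + C₀ * ∑ j, (c j)^2 := by ring
        rw [hexp]
        exact add_le_add hBpart hSpart
      have hfin := le_trans hlow hupp
      exact le_of_mul_le_mul_right (by linarith) hs
    have hW : ∀ i : Fin r, |lam (Fin.castLE hrd i) - lamb i| ≤ C₀ := by
      intro i
      rw [abs_le]
      exact ⟨by linarith [W1 i], by linarith [W2 i]⟩
    -- eigenvector entry bound
    have hvbound : ∀ (i : Fin r) (a : Fin d),
        |v (Fin.castLE hrd i) a| ≤ C₂ / Real.sqrt d := by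
      intro i a
      have hunit : dot (v (Fin.castLE hrd i)) (v (Fin.castLE hrd i)) = 1 := by
        show (∑ k, v (Fin.castLE hrd i) k * v (Fin.castLE hrd i) k) = (1:ℝ)
        rw [hvorth (Fin.castLE hrd i) (Fin.castLE hrd i)]
        simp
      have hwunit : ∀ k : Fin r, dot (w k) (w k) = 1 := by
        intro k
        show (∑ b, w k b * w k b) = (1:ℝ)
        rw [hworth k k]
        simp
      have hlamI : (d:ℝ)/C₁ ≤ lam (Fin.castLE hrd i) := le_trans (hlambLow i) (W1 i)
      have hlamIpos : 0 < lam (Fin.castLE hrd i) := lt_of_lt_of_le (by positivity) hlamI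
      have hkey : lam (Fin.castLE hrd i) * v (Fin.castLE hrd i) a
          = ((B * Bᵀ).mulVec (v (Fin.castLE hrd i))) a
            + (Su.mulVec (v (Fin.castLE hrd i))) a := by
        have h1 := congrFun (heig' (Fin.castLE hrd i)) a
        rw [Matrix.add_mulVec] at h1
        simpa [Pi.add_apply, Pi.smul_apply, smul_eq_mul] using h1.symm
      have hBv : |((B * Bᵀ).mulVec (v (Fin.castLE hrd i))) a|
          ≤ (r:ℝ)^2 * C₁^2 * Real.sqrt d := by
        rw [rep_mulVec hBB]
        refine le_trans (Finset.abs_sum_le_sum_abs _ _) ?_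
        have hterm : ∀ k ∈ Finset.univ,
            |lamb k * dot (w k) (v (Fin.castLE hrd i)) * w k a|
            ≤ (r:ℝ) * C₁^2 * Real.sqrt d := by
          intro k _
          rw [abs_mul, abs_mul, abs_of_nonneg (hlambPos k)]
          have hd1 : |dot (w k) (v (Fin.castLE hrd i))| ≤ 1 :=
            abs_le_one_of_unit (hwunit k) hunit
          calc lamb k * |dot (w k) (v (Fin.castLE hrd i))| * |w k a|
              ≤ lamb k * 1 * |w k a| := by
                exact mul_le_mul_of_nonneg_right
                  (mul_le_mul_of_nonneg_left hd1 (hlambPos k)) (abs_nonneg _)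
            _ = lamb k * |w k a| := by ring
            _ ≤ (r:ℝ) * C₁^2 * Real.sqrt d := hwent k a
        refine le_trans (Finset.sum_le_sum hterm) ?_
        rw [Finset.sum_const, Finset.card_univ, Fintype.card_fin, nsmul_eq_mul]
        have he : (r:ℝ) * ((r:ℝ) * C₁^2 * Real.sqrt d) = (r:ℝ)^2 * C₁^2 * Real.sqrt d := by
          ring
        rw [he]
      have hSv : |(Su.mulVec (v (Fin.castLE hrd i))) a| ≤ C₀ := by
        have h1 := entry_mulVec_bound Su hSuNorm (v (Fin.castLE hrd i)) a
        have h2 : vec2Norm (v (Fin.castLE hrd i)) = 1 := by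
          rw [vec2Norm_eq, hunit, Real.sqrt_one]
        rwa [h2, mul_one] at h1
      have hmain : lam (Fin.castLE hrd i) * |v (Fin.castLE hrd i) a|
          ≤ (r:ℝ)^2 * C₁^2 * Real.sqrt d + C₀ := by
        have he : lam (Fin.castLE hrd i) * |v (Fin.castLE hrd i) a|
            = |lam (Fin.castLE hrd i) * v (Fin.castLE hrd i) a| := by
          rw [abs_mul, abs_of_pos hlamIpos]
        rw [he, hkey]
        exact le_trans (abs_add_le _ _) (add_le_add hBv hSv)
      have hs1 : 1 ≤ Real.sqrt d := by
        have := Real.sqrt_le_sqrt hdR1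
        rwa [Real.sqrt_one] at this
      have hspos : 0 < Real.sqrt d := lt_of_lt_of_le one_pos hs1
      have hss : Real.sqrt d * Real.sqrt d = (d:ℝ) := Real.mul_self_sqrt (le_of_lt hdR)
      have h5 : (d:ℝ)/C₁ * |v (Fin.castLE hrd i) a|
          ≤ (r:ℝ)^2 * C₁^2 * Real.sqrt d + C₀ :=
        le_trans (mul_le_mul_of_nonneg_right hlamI (abs_nonneg _)) hmain
      rw [le_div_iff₀ hspos]
      have h6 : (d:ℝ) * |v (Fin.castLE hrd i) a|
          ≤ C₁ * ((r:ℝ)^2 * C₁^2 * Real.sqrt d + C₀) := by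
        rw [div_mul_eq_mul_div, div_le_iff₀ hC₁] at h5
        have hcomm : ((r:ℝ)^2 * C₁^2 * Real.sqrt d + C₀) * C₁
            = C₁ * ((r:ℝ)^2 * C₁^2 * Real.sqrt d + C₀) := mul_comm _ _
        linarith [h5]
      have e2 : C₀ * C₁ ≤ C₀ * C₁ * Real.sqrt d :=
        le_mul_of_one_le_right (by positivity) hs1
      have h7 : (|v (Fin.castLE hrd i) a| * Real.sqrt d) * Real.sqrt d
          ≤ ((r:ℝ)^2 * C₁^3 + C₀ * C₁) * Real.sqrt d := by
        have e1 : (|v (Fin.castLE hrd i) a| * Real.sqrt d) * Real.sqrt d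
            = (d:ℝ) * |v (Fin.castLE hrd i) a| := by
          rw [mul_assoc, hss]
          ring
        have hx : C₁ * ((r:ℝ)^2 * C₁^2 * Real.sqrt d + C₀)
            = (r:ℝ)^2 * C₁^3 * Real.sqrt d + C₀ * C₁ := by ring
        have hy : ((r:ℝ)^2 * C₁^3 + C₀ * C₁) * Real.sqrt d
            = (r:ℝ)^2 * C₁^3 * Real.sqrt d + C₀ * C₁ * Real.sqrt d := by ring
        rw [hx] at h6
        rw [e1, hy]
        linarith [e2, h6]
      have h8 : |v (Fin.castLE hrd i) a| * Real.sqrt d ≤ (r:ℝ)^2 * C₁^3 + C₀ * C₁ :=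
        le_of_mul_le_mul_right h7 hspos
      rw [hC₂def]
      linarith
    refine ⟨?_, ?_, hW⟩
    · intro i
      rw [vecSupNorm]
      exact ciSup_le fun a => hvbound i a
    · rw [matCoherence]
      have hsum : ∀ a : Fin d, (∑ j : Fin r,
          ((Matrix.of fun a (k : Fin r) => v (Fin.castLE hrd k) a) a j)^2)
          ≤ (r:ℝ) * (C₂^2 / d) := by
        intro a
        have hterm : ∀ j ∈ Finset.univ,
            ((Matrix.of fun a (k : Fin r) => v (Fin.castLE hrd k) a) a j)^2
            ≤ C₂^2 / d := by
          intro j _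
          have h1 := hvbound j a
          have h2 : (v (Fin.castLE hrd j) a)^2 ≤ (C₂ / Real.sqrt d)^2 := by
            rw [← sq_abs]
            exact pow_le_pow_left₀ (abs_nonneg _) h1 2
          have h3 : (C₂ / Real.sqrt d)^2 = C₂^2 / d := by
            rw [div_pow, Real.sq_sqrt (le_of_lt hdR)]
          rw [h3] at h2
          exact h2
        refine le_trans (Finset.sum_le_sum hterm) ?_
        rw [Finset.sum_const, Finset.card_univ, Fintype.card_fin, nsmul_eq_mul]
      refine le_trans (mul_le_mul_of_nonneg_left (ciSup_le hsum) (by positivity)) ?_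
      have he : (d:ℝ)/(r:ℝ) * ((r:ℝ) * (C₂^2 / d)) = C₂^2 := by
        field_simp
      rw [he]
      nlinarith [sq_nonneg C₂, hrR1, hC₂def]
  · refine ⟨Real.sqrt (C₁^2 * r + C₀), Real.sqrt_pos.mpr (by positivity), ?_⟩
    intro d hrd B Su hSuPSD hSuNorm lam v heig hvorth hlamSorted hcoh hlamr hlam1
    have hd0 : 0 < d := lt_of_lt_of_le hr hrd
    haveI : Nonempty (Fin d) := ⟨⟨0, hd0⟩⟩
    haveI : Nonempty (Fin r) := ⟨⟨0, hr⟩⟩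
    have hdR : (0:ℝ) < (d:ℕ) := by exact_mod_cast hd0
    have hrR : (0:ℝ) < (r:ℕ) := by exact_mod_cast hr
    have hv : Orthonormal' v := hvorth
    have heig' : ∀ i, (B * Bᵀ + Su).mulVec (v i) = lam i • v i := heig
    -- all eigenvalues at most C₁ * d
    have hlamtop : ∀ i : Fin d, lam i ≤ C₁ * d := by
      intro i
      have h1 : lam i ≤ lam ⟨0, hd0⟩ := hlamSorted ⟨0, hd0⟩ i (by simp [Fin.le_def])
      exact le_trans h1 hlam1
    -- tail eigenvalues at most C₀
    have htail : ∀ p : Fin d, r ≤ (p : ℕ) → lam p ≤ C₀ := by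
      intro p hp
      have hrd' : r < d := lt_of_le_of_lt hp p.isLt
      have hq : lam ⟨r, hrd'⟩ ≤ C₀ := by
        obtain ⟨c, hc, hperp⟩ := exists_combo (d := d) (Nat.lt_succ_self r)
          (fun j a => v (Fin.castLE hrd' j) a) (fun k a => B a k)
        have hιinj : Function.Injective (Fin.castLE hrd' : Fin (r+1) → Fin d) :=
          Fin.castLE_injective _
        have huorth : Orthonormal' (fun j : Fin (r+1) => v (Fin.castLE hrd' j)) :=
          orthonormal_comp hv _ hιinj
        have hs : 0 < ∑ j, (c j)^2 := sum_sq_pos_of_ne_zero hc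
        have hperp' : ∀ k : Fin r,
            dot (fun a => B a k) (fun a => ∑ j, c j * v (Fin.castLE hrd' j) a) = 0 := hperp
        have hlow : lam ⟨r, hrd'⟩ * ∑ j, (c j)^2
            ≤ dot (fun a => ∑ j, c j * v (Fin.castLE hrd' j) a)
              ((B * Bᵀ + Su).mulVec (fun a => ∑ j, c j * v (Fin.castLE hrd' j) a)) := by
          rw [quad_eigen heig' hv]
          have hvan : ∀ p', (∀ j : Fin (r+1), Fin.castLE hrd' j ≠ p') →
              lam p' * (dot (v p') (fun a => ∑ j, c j * v (Fin.castLE hrd' j) a))^2 = 0 := by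
            intro p' hp'
            have hz : dot (v p') (fun a => ∑ j, c j * v (Fin.castLE hrd' j) a) = 0 := by
              apply dot_perp_combo
              intro j
              have := hv p' (Fin.castLE hrd' j)
              rw [this]
              simp [Ne.symm (hp' j)]
            rw [hz]
            ring
          rw [sum_comp_eq (Fin.castLE hrd') hιinj _ hvan]
          have hterm : ∀ j ∈ Finset.univ, lam ⟨r, hrd'⟩ * (c j)^2
              ≤ lam (Fin.castLE hrd' j) *
                (dot (v (Fin.castLE hrd' j)) (fun a => ∑ j, c j * v (Fin.castLE hrd' j) a))^2 := by
            intro j _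
            have hcoeff : dot (v (Fin.castLE hrd' j))
                (fun a => ∑ j, c j * v (Fin.castLE hrd' j) a) = c j := dot_combo huorth c j
            rw [hcoeff]
            have hle : lam ⟨r, hrd'⟩ ≤ lam (Fin.castLE hrd' j) :=
              hlamSorted (Fin.castLE hrd' j) ⟨r, hrd'⟩ (by simp [Fin.le_def]; omega)
            exact mul_le_mul_of_nonneg_right hle (sq_nonneg _)
          calc lam ⟨r, hrd'⟩ * ∑ j, (c j)^2 = ∑ j, lam ⟨r, hrd'⟩ * (c j)^2 :=
                Finset.mul_sum _ _ _
            _ ≤ _ := Finset.sum_le_sum hterm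
        have hup : dot (fun a => ∑ j, c j * v (Fin.castLE hrd' j) a)
              ((B * Bᵀ + Su).mulVec (fun a => ∑ j, c j * v (Fin.castLE hrd' j) a))
            ≤ C₀ * ∑ j, (c j)^2 := by
          have h1 : (B * Bᵀ + Su).mulVec (fun a => ∑ j, c j * v (Fin.castLE hrd' j) a)
              = fun a => ((B * Bᵀ).mulVec (fun a => ∑ j, c j * v (Fin.castLE hrd' j) a)) a
                + (Su.mulVec (fun a => ∑ j, c j * v (Fin.castLE hrd' j) a)) a := by
            rw [Matrix.add_mulVec]
            rfl
          rw [h1, dot_add_right]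
          have h2 : dot (fun a => ∑ j, c j * v (Fin.castLE hrd' j) a)
              ((B * Bᵀ).mulVec (fun a => ∑ j, c j * v (Fin.castLE hrd' j) a)) = 0 := by
            rw [quad_BBt]
            apply Finset.sum_eq_zero
            intro k _
            have h3 : ∑ a, B a k * (∑ j, c j * v (Fin.castLE hrd' j) a) = 0 := hperp' k
            rw [h3]
            exact zero_pow two_ne_zero
          rw [h2, zero_add]
          have h3 := quad_specnorm Su hSuNorm (fun a => ∑ j, c j * v (Fin.castLE hrd' j) a)
          have h4 : dot (fun a => ∑ j, c j * v (Fin.castLE hrd' j) a)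
              (fun a => ∑ j, c j * v (Fin.castLE hrd' j) a) = ∑ j, (c j)^2 :=
            norm_combo huorth c
          rw [h4] at h3
          exact le_trans (le_abs_self _) h3
        have := le_trans hlow hup
        exact le_of_mul_le_mul_right (by linarith) hs
      exact le_trans (hlamSorted ⟨r, hrd'⟩ p (by simp [Fin.le_def]; omega)) hq
    -- coherence gives rowwise bound
    have hcohA : ∀ a : Fin d, ∑ j : Fin r, (v (Fin.castLE hrd j) a)^2 ≤ C₁ * r / d := by
      intro a
      rw [matCoherence] at hcoh
      have hS := le_fin_ciSup (fun i => ∑ j : Fin r,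
        ((Matrix.of fun a (k : Fin r) => v (Fin.castLE hrd k) a) i j)^2) a
      have hdr : (0:ℝ) < (d:ℝ)/(r:ℝ) := by positivity
      have h5 : ((d:ℝ)/(r:ℝ)) * ∑ j : Fin r,
          ((Matrix.of fun a (k : Fin r) => v (Fin.castLE hrd k) a) a j)^2 ≤ C₁ :=
        le_trans (mul_le_mul_of_nonneg_left hS (le_of_lt hdr)) hcoh
      have h6 : ∑ j : Fin r, ((Matrix.of fun a (k : Fin r) => v (Fin.castLE hrd k) a) a j)^2
          = ∑ j : Fin r, (v (Fin.castLE hrd j) a)^2 := rfl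
      rw [h6] at h5
      rw [div_mul_eq_mul_div, div_le_iff₀ hrR] at h5
      rw [le_div_iff₀ hdR]
      nlinarith [h5]
    -- entrywise bound on B
    have hentry : ∀ (a : Fin d) (k : Fin r), |B a k| ≤ Real.sqrt (C₁^2 * r + C₀) := by
      intro a k
      have h1 : (B a k)^2 ≤ ∑ m, (B a m)^2 :=
        Finset.single_le_sum (f := fun m => (B a m)^2) (fun m _ => sq_nonneg _)
          (Finset.mem_univ k)
      have h2 : ∑ m, (B a m)^2 = (B * Bᵀ) a a := by
        rw [Matrix.mul_apply]
        exact Finset.sum_congr rfl fun m _ => by rw [Matrix.transpose_apply, sq]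
      have h3 : (B * Bᵀ) a a ≤ (B * Bᵀ + Su) a a := by
        have he : (B * Bᵀ + Su) a a = (B * Bᵀ) a a + Su a a := rfl
        rw [he]
        linarith [psd_diag_nonneg hSuPSD a]
      have h4 : (B * Bᵀ + Su) a a = ∑ i, lam i * (v i a)^2 := by
        rw [entries_eigen heig' hv a a]
        exact Finset.sum_congr rfl fun i _ => by ring
      have himg : Finset.univ.image (Fin.castLE hrd)
          = Finset.univ.filter (fun i : Fin d => (i:ℕ) < r) := by
        ext i
        simp only [Finset.mem_image, Finset.mem_filter, Finset.mem_univ, true_and]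
        constructor
        · rintro ⟨j, _, rfl⟩
          exact j.isLt
        · intro hi
          exact ⟨⟨(i:ℕ), hi⟩, rfl⟩
      have hpart1 : ∑ i ∈ Finset.univ.filter (fun i : Fin d => (i:ℕ) < r),
          lam i * (v i a)^2 ≤ C₁ * d * (C₁ * r / d) := by
        rw [← himg, Finset.sum_image (fun x _ y _ h => Fin.castLE_injective hrd h)]
        calc ∑ j : Fin r, lam (Fin.castLE hrd j) * (v (Fin.castLE hrd j) a)^2
            ≤ ∑ j : Fin r, (C₁ * d) * (v (Fin.castLE hrd j) a)^2 :=
              Finset.sum_le_sum fun j _ =>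
                mul_le_mul_of_nonneg_right (hlamtop _) (sq_nonneg _)
          _ = (C₁ * d) * ∑ j : Fin r, (v (Fin.castLE hrd j) a)^2 := (Finset.mul_sum _ _ _).symm
          _ ≤ (C₁ * d) * (C₁ * r / d) :=
              mul_le_mul_of_nonneg_left (hcohA a) (by positivity)
      have hones : ∑ i, (v i a)^2 = 1 := by
        have hcc := rows_complete hv a a
        simp at hcc
        rw [← hcc]
        exact Finset.sum_congr rfl fun i _ => sq (v i a)
      have hpart2 : ∑ i ∈ Finset.univ.filter (fun i : Fin d => ¬ (i:ℕ) < r),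
          lam i * (v i a)^2 ≤ C₀ := by
        calc ∑ i ∈ Finset.univ.filter (fun i : Fin d => ¬ (i:ℕ) < r), lam i * (v i a)^2
            ≤ ∑ i ∈ Finset.univ.filter (fun i : Fin d => ¬ (i:ℕ) < r), C₀ * (v i a)^2 := by
              apply Finset.sum_le_sum
              intro i hi
              have hi' : r ≤ (i:ℕ) := le_of_not_gt (Finset.mem_filter.mp hi).2
              exact mul_le_mul_of_nonneg_right (htail i hi') (sq_nonneg _)
          _ ≤ ∑ i, C₀ * (v i a)^2 :=
              Finset.sum_le_sum_of_subset_of_nonneg (Finset.filter_subset _ _)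
                (fun i _ _ => by positivity)
          _ = C₀ * ∑ i, (v i a)^2 := (Finset.mul_sum _ _ _).symm
          _ = C₀ := by rw [hones, mul_one]
      have hsplit := Finset.sum_filter_add_sum_filter_not Finset.univ
        (fun i : Fin d => (i:ℕ) < r) (fun i => lam i * (v i a)^2)
      have h7 : (B a k)^2 ≤ C₁ * d * (C₁ * r / d) + C₀ := by
        rw [h2] at h1
        linarith [h1, h3, h4 ▸ (le_of_eq h4), hsplit, hpart1, hpart2, le_of_eq h4]
      have h8 : C₁ * d * (C₁ * r / d) = C₁^2 * r := by
        field_simp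
      rw [h8] at h7
      calc |B a k| = Real.sqrt ((B a k)^2) := (Real.sqrt_sq_eq_abs _).symm
        _ ≤ Real.sqrt (C₁^2 * r + C₀) := Real.sqrt_le_sqrt h7
    rw [matMaxNorm]
    apply ciSup_le
    intro a
    apply ciSup_le
    intro k
    exact hentry a k
end

section
/- Let T be a bounded linear operator on a Banach space 𝓑 with norm ‖·‖, assume T has a bounded inverse, and set β = ‖T^{−1}‖^{−1}. Let φ : 𝓑 → 𝓑 satisfy ‖φ(x)‖ ≤ η‖x‖² and ‖φ(x) − φ(y)‖ ≤ 2η·max{‖x‖, ‖y‖}·‖x − y‖ for some η ≥ 0 and all x, y ∈ 𝓑. Suppose 𝓑₀ is a closed subspace of 𝓑 with T^{−1}(𝓑₀) ⊆ 𝓑₀ and φ(𝓑₀) ⊆ 𝓑₀, and let y ∈ 𝓑₀ satisfy 4η‖y‖ < β². Then the sequence defined by x₀ = 0 and x_{k+1} = T^{−1}(y + φ(x_k)) converges to a solution x* of Tx = y + φ(x); moreover x* ∈ 𝓑₀ and ‖x*‖ ≤ 2‖y‖/β. -/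
open Matrix BigOperators

/-- Convergence of the quadratic fixed-point iteration in a Banach space
(Lemma 5.2 of Fan–Wang–Zhong, after Stewart). -/
theorem banach_quadratic_fixed_point
    {B : Type*} [NormedAddCommGroup B] [NormedSpace ℝ B] [CompleteSpace B]
    (T : B ≃L[ℝ] B) (β : ℝ) (hβ : β = ‖(T.symm : B →L[ℝ] B)‖⁻¹)
    (φ : B → B) (η : ℝ) (hη : 0 ≤ η)
    (hφ1 : ∀ x : B, ‖φ x‖ ≤ η * ‖x‖ ^ 2)
    (hφ2 : ∀ x y : B, ‖φ x - φ y‖ ≤ 2 * η * max ‖x‖ ‖y‖ * ‖x - y‖)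
    (B₀ : Submodule ℝ B) (hB₀closed : IsClosed (B₀ : Set B))
    (hTinv : ∀ x ∈ B₀, T.symm x ∈ B₀)
    (hφB₀ : ∀ x ∈ B₀, φ x ∈ B₀)
    (y : B) (hy : y ∈ B₀) (hsmall : 4 * η * ‖y‖ < β ^ 2)
    (x : ℕ → B) (hx0 : x 0 = 0)
    (hxrec : ∀ k : ℕ, x (k + 1) = T.symm (y + φ (x k))) :
    ∃ xs : B, Filter.Tendsto x Filter.atTop (nhds xs) ∧
      T xs = y + φ xs ∧ xs ∈ B₀ ∧ ‖xs‖ ≤ 2 * ‖y‖ / β := by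
  -- positivity of β
  have hβ0 : 0 ≤ β := by rw [hβ]; positivity
  have hβsq : 0 < β ^ 2 :=
    lt_of_le_of_lt (by positivity) hsmall
  have hβpos : 0 < β := by
    rcases hβ0.lt_or_eq with h | h
    · exact h
    · exfalso; rw [← h] at hβsq; simp at hβsq
  have hTn : ‖(T.symm : B →L[ℝ] B)‖ = β⁻¹ := by
    rw [hβ, inv_inv]
  have hc : ∀ z : B, ‖T.symm z‖ ≤ β⁻¹ * ‖z‖ := by
    intro z
    calc ‖T.symm z‖ ≤ ‖(T.symm : B →L[ℝ] B)‖ * ‖z‖ :=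
          (T.symm : B →L[ℝ] B).le_opNorm z
    _ = β⁻¹ * ‖z‖ := by rw [hTn]
  set r : ℝ := 2 * ‖y‖ / β with hr
  have hrnn : 0 ≤ r := by positivity
  set q : ℝ := 4 * η * ‖y‖ / β ^ 2 with hq
  have hq0 : 0 ≤ q := by positivity
  have hq1 : q < 1 := by
    rw [hq, div_lt_one hβsq]; exact hsmall
  -- bound on the iterates
  have hbound : ∀ k, ‖x k‖ ≤ r := by
    intro k
    induction k with
    | zero => rw [hx0]; simp only [norm_zero]; exact hrnn
    | succ k ih =>
      rw [hxrec k]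
      calc ‖T.symm (y + φ (x k))‖ ≤ β⁻¹ * ‖y + φ (x k)‖ := hc _
        _ ≤ β⁻¹ * (‖y‖ + η * ‖x k‖ ^ 2) := by
            gcongr
            exact (norm_add_le _ _).trans (by gcongr; exact hφ1 _)
        _ ≤ β⁻¹ * (‖y‖ + η * r ^ 2) := by gcongr
        _ ≤ r := by
            rw [hr, inv_mul_le_iff₀ hβpos]
            have key : η * (2 * ‖y‖ / β) ^ 2 ≤ ‖y‖ := by
              have h1 : η * (2 * ‖y‖ / β) ^ 2 = (4 * η * ‖y‖ / β ^ 2) * ‖y‖ := by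
                field_simp; ring
              rw [h1]
              calc (4 * η * ‖y‖ / β ^ 2) * ‖y‖ ≤ 1 * ‖y‖ := by
                    gcongr
                _ = ‖y‖ := one_mul _
            have hb : β * (2 * ‖y‖ / β) = 2 * ‖y‖ := by field_simp
            linarith [key]
  -- contraction step
  have hstep : ∀ k, ‖x (k + 1) - x (k + 2)‖ ≤ q * ‖x k - x (k + 1)‖ := by
    intro k
    have e : x (k + 1) - x (k + 2) = T.symm (φ (x k) - φ (x (k + 1))) := by
      have h1 : φ (x k) - φ (x (k + 1)) = (y + φ (x k)) - (y + φ (x (k + 1))) := by abel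
      rw [h1, map_sub, ← hxrec k, ← hxrec (k + 1)]
    rw [e]
    calc ‖T.symm (φ (x k) - φ (x (k + 1)))‖
        ≤ β⁻¹ * ‖φ (x k) - φ (x (k + 1))‖ := hc _
      _ ≤ β⁻¹ * (2 * η * max ‖x k‖ ‖x (k + 1)‖ * ‖x k - x (k + 1)‖) := by
          gcongr; exact hφ2 _ _
      _ ≤ β⁻¹ * (2 * η * r * ‖x k - x (k + 1)‖) := by
          gcongr
          exact max_le (hbound k) (hbound (k + 1))
      _ = q * ‖x k - x (k + 1)‖ := by
          rw [hq, hr]; field_simp; ring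
  -- geometric bound
  have hgeo : ∀ n, dist (x n) (x (n + 1)) ≤ ‖x 0 - x 1‖ * q ^ n := by
    intro n
    induction n with
    | zero => simp [dist_eq_norm]
    | succ n ih =>
      rw [dist_eq_norm]
      calc ‖x (n + 1) - x (n + 2)‖ ≤ q * ‖x n - x (n + 1)‖ := hstep n
        _ = q * dist (x n) (x (n + 1)) := by rw [dist_eq_norm]
        _ ≤ q * (‖x 0 - x 1‖ * q ^ n) := by gcongr
        _ = ‖x 0 - x 1‖ * q ^ (n + 1) := by ring
  have hcauchy : CauchySeq x := cauchySeq_of_le_geometric q _ hq1 hgeo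
  obtain ⟨xs, hlim⟩ := cauchySeq_tendsto_of_complete hcauchy
  -- membership
  have hmem : ∀ k, x k ∈ B₀ := by
    intro k
    induction k with
    | zero => rw [hx0]; exact Submodule.zero_mem _
    | succ k ih =>
      rw [hxrec k]
      exact hTinv _ (Submodule.add_mem _ hy (hφB₀ _ ih))
  have hxsmem : xs ∈ B₀ :=
    hB₀closed.mem_of_tendsto hlim (Filter.Eventually.of_forall hmem)
  -- φ continuity along the sequence
  have hφlim : Filter.Tendsto (fun k => φ (x k)) Filter.atTop (nhds (φ xs)) := by
    rw [tendsto_iff_norm_sub_tendsto_zero]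
    have hxn : Filter.Tendsto (fun k => ‖x k - xs‖) Filter.atTop (nhds 0) :=
      tendsto_iff_norm_sub_tendsto_zero.mp hlim
    have hxsr : ‖xs‖ ≤ r :=
      le_of_tendsto hlim.norm (Filter.Eventually.of_forall hbound)
    apply squeeze_zero (fun k => norm_nonneg _)
      (g := fun k => 2 * η * r * ‖x k - xs‖)
    · intro k
      calc ‖φ (x k) - φ xs‖ ≤ 2 * η * max ‖x k‖ ‖xs‖ * ‖x k - xs‖ := hφ2 _ _
        _ ≤ 2 * η * r * ‖x k - xs‖ := by
            gcongr
            exact max_le (hbound k) hxsr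
    · simpa using hxn.const_mul (2 * η * r)
  -- fixed point
  have hlim2 : Filter.Tendsto (fun k => x (k + 1)) Filter.atTop (nhds xs) :=
    hlim.comp (Filter.tendsto_add_atTop_nat 1)
  have hlim3 : Filter.Tendsto (fun k => T.symm (y + φ (x k))) Filter.atTop
      (nhds (T.symm (y + φ xs))) :=
    (T.symm.continuous.tendsto _).comp
      (Filter.Tendsto.const_add y hφlim)
  have hfix : xs = T.symm (y + φ xs) := by
    apply tendsto_nhds_unique hlim2
    simpa only [← hxrec] using hlim3
  refine ⟨xs, hlim, ?_, hxsmem, ?_⟩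
  · conv_lhs => rw [hfix]
    exact T.apply_symm_apply _
  · exact le_of_tendsto hlim.norm (Filter.Eventually.of_forall hbound)
end

section
/- In the symmetric quadratic-equation setup, suppose |λ_r| − ε > max{3τ, 64(1+rμ)·r^{3/2}·μ^{1/2}·κ}. Let Q̄ = V_⊥Q be any solution of the quadratic equation Q̄L̄_1 − L̄_2Q̄ = H − Q̄HᵀQ̄ with ‖Q̄‖_max ≤ ω/√d, and set V̄ = (V + Q̄)(I_r + Q̄ᵀQ̄)^{−1/2}. Then there exists an orthogonal matrix R ∈ ℝ^{r×r} such that the columns of V̄R are ṽ_1,…,ṽ_r, the top-r (by absolute eigenvalue) orthonormal eigenvectors of Ã = A + E. -/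
open Matrix BigOperators

set_option maxHeartbeats 1000000

section Aux

lemma fwz_le_csupr {n : Type*} [Fintype n] [Nonempty n] (f : n → ℝ) (i : n) :
    f i ≤ ⨆ j, f j :=
  le_ciSup (Set.Finite.bddAbove (Set.finite_range f)) i

lemma fwz_entry_le_max {m n : Type*} [Fintype m] [Fintype n] [Nonempty m] [Nonempty n]
    (M : Matrix m n ℝ) (i : m) (j : n) : |M i j| ≤ matMaxNorm M := by
  refine le_trans (fwz_le_csupr (fun j => |M i j|) j) ?_
  exact fwz_le_csupr (fun i => ⨆ j, |M i j|) i

lemma fwz_max_nonneg {m n : Type*} [Fintype m] [Fintype n] [Nonempty m] [Nonempty n]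
    (M : Matrix m n ℝ) : 0 ≤ matMaxNorm M := by
  obtain ⟨i⟩ := (inferInstance : Nonempty m); obtain ⟨j⟩ := (inferInstance : Nonempty n)
  exact le_trans (abs_nonneg _) (fwz_entry_le_max M i j)

lemma fwz_row_le_inf {m n : Type*} [Fintype m] [Fintype n] [Nonempty m]
    (M : Matrix m n ℝ) (i : m) : ∑ j, |M i j| ≤ matInfNorm M :=
  fwz_le_csupr (fun i => ∑ j, |M i j|) i

lemma fwz_inf_nonneg {m n : Type*} [Fintype m] [Fintype n] [Nonempty m]
    (M : Matrix m n ℝ) : 0 ≤ matInfNorm M := by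
  obtain ⟨i⟩ := (inferInstance : Nonempty m)
  exact le_trans (Finset.sum_nonneg fun j _ => abs_nonneg _) (fwz_row_le_inf M i)

lemma fwz_sum_split {d r : ℕ} (hrd : r ≤ d) (f : Fin d → ℝ) :
    ∑ i, f i = (∑ k : Fin r, f (Fin.castLE hrd k)) +
      ∑ k : Fin (d - r), f ⟨r + (k : ℕ), by omega⟩ := by
  have h : r + (d - r) = d := by omega
  have e1 : ∑ i, f i = ∑ i : Fin (r + (d - r)), f (finCongr h i) :=
    (Fintype.sum_equiv (finCongr h) _ f (fun i => rfl)).symm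
  rw [e1, Fin.sum_univ_add]
  congr 1

/-- Cauchy-Schwarz in weighted form. -/
lemma fwz_cs {n : Type*} [Fintype n] (f x : n → ℝ) :
    (∑ j, f j * x j) ^ 2 ≤ (∑ j, |f j|) * (∑ j, |f j| * x j ^ 2) := by
  have h1 : (∑ j, f j * x j) ^ 2 ≤ (∑ j, |f j| * |x j|) ^ 2 := by
    rw [sq_abs (∑ j, f j * x j) |>.symm]
    apply pow_le_pow_left₀ (abs_nonneg _)
    refine le_trans (Finset.abs_sum_le_sum_abs _ _) ?_
    exact le_of_eq (Finset.sum_congr rfl fun j _ => abs_mul _ _)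
  refine h1.trans ?_
  have h2 : ∀ j : n, |f j| * |x j| = Real.sqrt |f j| * (Real.sqrt |f j| * |x j|) := by
    intro j
    rw [← mul_assoc, Real.mul_self_sqrt (abs_nonneg _)]
  calc (∑ j, |f j| * |x j|) ^ 2
      = (∑ j, Real.sqrt |f j| * (Real.sqrt |f j| * |x j|)) ^ 2 := by
        rw [Finset.sum_congr rfl fun j _ => h2 j]
    _ ≤ (∑ j, Real.sqrt |f j| ^ 2) * ∑ j, (Real.sqrt |f j| * |x j|) ^ 2 :=
        Finset.sum_mul_sq_le_sq_mul_sq _ _ _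
    _ = (∑ j, |f j|) * ∑ j, |f j| * x j ^ 2 := by
        congr 1
        · exact Finset.sum_congr rfl fun j _ => Real.sq_sqrt (abs_nonneg _)
        · refine Finset.sum_congr rfl fun j _ => ?_
          rw [mul_pow, Real.sq_sqrt (abs_nonneg _), sq_abs]

/-- ℓ₂ operator bound from row and column sum bounds. -/
lemma fwz_opBound {n : Type*} [Fintype n] (M : Matrix n n ℝ) (x : n → ℝ) (t : ℝ)
    (ht0 : 0 ≤ t) (hrow : ∀ i, ∑ j, |M i j| ≤ t) (hcol : ∀ j, ∑ i, |M i j| ≤ t) :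
    ∑ i, (∑ j, M i j * x j) ^ 2 ≤ t ^ 2 * ∑ j, x j ^ 2 := by
  have step1 : ∑ i, (∑ j, M i j * x j) ^ 2 ≤ ∑ i, t * ∑ j, |M i j| * x j ^ 2 := by
    refine Finset.sum_le_sum fun i _ => le_trans (fwz_cs _ _) ?_
    exact mul_le_mul_of_nonneg_right (hrow i)
      (Finset.sum_nonneg fun j _ => mul_nonneg (abs_nonneg _) (sq_nonneg _))
  refine step1.trans ?_
  rw [← Finset.mul_sum, Finset.sum_comm]
  have step2 : ∑ j, ∑ i, |M i j| * x j ^ 2 ≤ ∑ j, t * x j ^ 2 := by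
    refine Finset.sum_le_sum fun j _ => ?_
    rw [← Finset.sum_mul]
    exact mul_le_mul_of_nonneg_right (hcol j) (sq_nonneg _)
  calc t * ∑ j, ∑ i, |M i j| * x j ^ 2 ≤ t * ∑ j, t * x j ^ 2 :=
        mul_le_mul_of_nonneg_left step2 ht0
    _ = t ^ 2 * ∑ j, x j ^ 2 := by rw [← Finset.mul_sum]; ring

/-- Frobenius bound. -/
lemma fwz_frob {m n : Type*} [Fintype m] [Fintype n] (M : Matrix m n ℝ) (x : n → ℝ) :
    ∑ i, (∑ j, M i j * x j) ^ 2 ≤ (∑ i, ∑ j, M i j ^ 2) * ∑ j, x j ^ 2 := by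
  rw [Finset.sum_mul]
  exact Finset.sum_le_sum fun i _ => Finset.sum_mul_sq_le_sq_mul_sq _ _ _

/-- eigenvalue bounded by max row sum. -/
lemma fwz_eig_bound {n : Type*} [Fintype n] (M : Matrix n n ℝ) (x : n → ℝ) (lam t : ℝ)
    (hx : x ≠ 0) (heig : ∀ i, ∑ j, M i j * x j = lam * x i)
    (ht : ∀ i, ∑ j, |M i j| ≤ t) : |lam| ≤ t := by
  obtain ⟨i1, hi1⟩ := Function.ne_iff.mp hx
  have hne : (Finset.univ : Finset n).Nonempty := ⟨i1, Finset.mem_univ _⟩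
  obtain ⟨i0, -, hmax⟩ := Finset.exists_max_image Finset.univ (fun i => |x i|) hne
  have hx0 : 0 < |x i0| := lt_of_lt_of_le (abs_pos.mpr hi1) (hmax i1 (Finset.mem_univ _))
  have key : |lam| * |x i0| ≤ t * |x i0| := by
    calc |lam| * |x i0| = |lam * x i0| := (abs_mul _ _).symm
      _ = |∑ j, M i0 j * x j| := by rw [heig i0]
      _ ≤ ∑ j, |M i0 j * x j| := Finset.abs_sum_le_sum_abs _ _
      _ ≤ ∑ j, |M i0 j| * |x i0| := by
          refine Finset.sum_le_sum fun j _ => ?_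
          rw [abs_mul]
          exact mul_le_mul_of_nonneg_left (hmax j (Finset.mem_univ _)) (abs_nonneg _)
      _ = (∑ j, |M i0 j|) * |x i0| := (Finset.sum_mul _ _ _).symm
      _ ≤ t * |x i0| := mul_le_mul_of_nonneg_right (ht i0) (le_of_lt hx0)
  exact le_of_mul_le_mul_right key hx0

/-- completeness of orthonormal rows. -/
lemma fwz_complete {d : ℕ} (v : Fin d → Fin d → ℝ)
    (hon : ∀ i j, ∑ k, v i k * v j k = if i = j then (1 : ℝ) else 0) :
    ∀ a b, ∑ i, v i a * v i b = if a = b then (1 : ℝ) else 0 := by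
  set P : Matrix (Fin d) (Fin d) ℝ := Matrix.of (fun i a => v i a) with hP
  have h1 : P * Pᵀ = 1 := by
    ext i j
    simp only [Matrix.mul_apply, Matrix.transpose_apply, hP, Matrix.of_apply, Matrix.one_apply]
    exact hon i j
  have h2 : Pᵀ * P = 1 := mul_eq_one_comm.mp h1
  intro a b
  have := congrFun (congrFun h2 a) b
  simpa only [Matrix.mul_apply, Matrix.transpose_apply, hP, Matrix.of_apply,
    Matrix.one_apply] using this

/-- expansion of a vector in a complete system. -/
lemma fwz_expand {d : ℕ} (v : Fin d → Fin d → ℝ)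
    (hcomp : ∀ a b, ∑ i, v i a * v i b = if a = b then (1 : ℝ) else 0)
    (w : Fin d → ℝ) (b : Fin d) :
    w b = ∑ i, (∑ c, v i c * w c) * v i b := by
  have : ∑ i, (∑ c, v i c * w c) * v i b = ∑ c, w c * ∑ i, v i c * v i b := by
    simp_rw [Finset.sum_mul, Finset.mul_sum]
    rw [Finset.sum_comm]
    exact Finset.sum_congr rfl fun c _ => Finset.sum_congr rfl fun i _ => by ring
  rw [this]
  simp only [hcomp, mul_ite, mul_one, mul_zero, Finset.sum_ite_eq', Finset.mem_univ, if_true]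

/-- norm of a vector given by coordinates in an orthonormal system. -/
lemma fwz_coords_norm {ι α : Type*} [Fintype ι] [DecidableEq ι] [Fintype α] (v : ι → α → ℝ)
    (hon : ∀ i j, ∑ k, v i k * v j k = if i = j then (1 : ℝ) else 0)
    (γ : ι → ℝ) :
    ∑ a, (∑ i, γ i * v i a) ^ 2 = ∑ i, γ i ^ 2 := by
  have expand : ∀ a : α, (∑ i, γ i * v i a) ^ 2
      = ∑ i, ∑ j, γ i * γ j * (v i a * v j a) := by
    intro a
    rw [sq, Finset.sum_mul_sum]
    exact Finset.sum_congr rfl fun i _ => Finset.sum_congr rfl fun j _ => by ring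
  calc ∑ a, (∑ i, γ i * v i a) ^ 2 = ∑ a, ∑ i, ∑ j, γ i * γ j * (v i a * v j a) := by
        exact Finset.sum_congr rfl fun a _ => expand a
    _ = ∑ i, ∑ j, γ i * γ j * ∑ a, v i a * v j a := by
        rw [Finset.sum_comm]
        refine Finset.sum_congr rfl fun i _ => ?_
        rw [Finset.sum_comm]
        exact Finset.sum_congr rfl fun j _ => by rw [Finset.mul_sum]
    _ = ∑ i, γ i ^ 2 := by
        refine Finset.sum_congr rfl fun i _ => ?_
        rw [Finset.sum_eq_single i]
        · rw [hon, if_pos rfl]; ring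
        · intro j _ hj
          rw [hon, if_neg (Ne.symm hj), mul_zero]
        · intro h; exact absurd (Finset.mem_univ i) h

/-- Parseval. -/
lemma fwz_parseval {d : ℕ} (v : Fin d → Fin d → ℝ)
    (hcomp : ∀ a b, ∑ i, v i a * v i b = if a = b then (1 : ℝ) else 0)
    (w : Fin d → ℝ) :
    ∑ i, (∑ b, v i b * w b) ^ 2 = ∑ a, w a ^ 2 := by
  have expand : ∀ i : Fin d, (∑ b, v i b * w b) ^ 2
      = ∑ b, ∑ c, w b * w c * (v i b * v i c) := by
    intro i
    rw [sq, Finset.sum_mul_sum]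
    exact Finset.sum_congr rfl fun b _ => Finset.sum_congr rfl fun c _ => by ring
  calc ∑ i, (∑ b, v i b * w b) ^ 2 = ∑ i, ∑ b, ∑ c, w b * w c * (v i b * v i c) :=
        Finset.sum_congr rfl fun i _ => expand i
    _ = ∑ b, ∑ c, w b * w c * ∑ i, v i b * v i c := by
        rw [Finset.sum_comm]
        refine Finset.sum_congr rfl fun b _ => ?_
        rw [Finset.sum_comm]
        exact Finset.sum_congr rfl fun c _ => by rw [Finset.mul_sum]
    _ = ∑ a, w a ^ 2 := by
        refine Finset.sum_congr rfl fun b _ => ?_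
        rw [Finset.sum_eq_single b]
        · rw [hcomp, if_pos rfl]; ring
        · intro c _ hc
          rw [hcomp, if_neg (Ne.symm hc), mul_zero]
        · intro h; exact absurd (Finset.mem_univ b) h

/-- real matrices: conjTranspose is transpose. -/
lemma fwz_ct {m n : Type*} [Fintype m] [Fintype n] (M : Matrix m n ℝ) : Mᴴ = Mᵀ := by
  ext i j
  simp [Matrix.conjTranspose_apply]

lemma fwz_herm_transpose {n : Type*} [Fintype n] (M : Matrix n n ℝ) (h : M.IsHermitian) :
    Mᵀ = M := by
  rw [← fwz_ct]; exact h

lemma fwz_swap {α β : Type*} [Fintype α] [Fintype β] (f : α → ℝ) (g : β → ℝ)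
    (h : β → α → ℝ) :
    ∑ a, f a * ∑ b, g b * h b a = ∑ b, g b * ∑ a, f a * h b a := by
  simp_rw [Finset.mul_sum]
  rw [Finset.sum_comm]
  exact Finset.sum_congr rfl fun b _ => Finset.sum_congr rfl fun a _ => by ring

lemma fwz_arith_fro (r om S : ℝ) (hr : 1 ≤ r) (h0 : 0 ≤ om) (hs : om * (8 * r) ≤ 1)
    (hS : S ≤ r * om ^ 2) : S ≤ 1 / 64 := by
  nlinarith [mul_le_mul_of_nonneg_right hs h0, mul_nonneg h0 h0]

lemma fwz_arith_gap (g tau : ℝ) (htau : 0 ≤ tau) (hg : 3 * tau < g)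
    (h : (g - tau) ^ 2 * (64 / 65) ≤ tau ^ 2) : False := by
  nlinarith [sq_nonneg (g - 3 * tau), sq_nonneg tau, sq_nonneg (g - tau)]

lemma fwz_arith_cross (P Qq Xc e t cs : ℝ) (hP : P ≤ e ^ 2 * cs) (hQ : Qq ≤ t ^ 2 * cs)
    (hP0 : 0 ≤ P) (hQ0 : 0 ≤ Qq) (hX : Xc ^ 2 ≤ P * Qq) (he : 0 ≤ e) (ht : 0 ≤ t)
    (hcs : 0 ≤ cs) : P + 2 * Xc + Qq ≤ (e + t) ^ 2 * cs := by
  have h1 : P * Qq ≤ (e ^ 2 * cs) * (t ^ 2 * cs) :=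
    mul_le_mul hP hQ hQ0 (by positivity)
  have h2 : Xc ^ 2 ≤ (e * t * cs) ^ 2 := by nlinarith
  have h3 : Xc ≤ e * t * cs := by
    have h4 : |Xc| ≤ e * t * cs := by
      rw [← Real.sqrt_sq_eq_abs, ← Real.sqrt_sq (by positivity : (0:ℝ) ≤ e * t * cs)]
      exact Real.sqrt_le_sqrt h2
    exact le_trans (le_abs_self _) h4
  nlinarith

end Aux

/-- The candidate eigenbasis V̄ spans the top-r eigenspace of Ã = A + E
(Lemma 5.3 of Fan–Wang–Zhong). -/
theorem candidate_basis_matches_perturbed_eigenspace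
    (d r : ℕ) (hr : 0 < r) (hrd : r ≤ d)
    (A E : Matrix (Fin d) (Fin d) ℝ)
    (hAsymm : Aᵀ = A) (hEsymm : Eᵀ = E)
    (lam : Fin d → ℝ) (v : Fin d → Fin d → ℝ)
    (heig : ∀ i, A.mulVec (v i) = lam i • v i)
    (hon : ∀ i j, ∑ k, v i k * v j k = if i = j then (1 : ℝ) else 0)
    (hdec : ∀ i j : Fin d, i ≤ j → |lam j| ≤ |lam i|)
    (V : Matrix (Fin d) (Fin r) ℝ)
    (hV : V = Matrix.of fun a k => v (Fin.castLE hrd k) a)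
    (Vp : Matrix (Fin d) (Fin (d - r)) ℝ)
    (hVp : Vp = Matrix.of fun (a : Fin d) (k : Fin (d - r)) => v ⟨r + (k : ℕ), by have := k.isLt; omega⟩ a)
    (Lam₁ : Matrix (Fin r) (Fin r) ℝ)
    (hLam₁ : Lam₁ = Matrix.diagonal fun i => lam (Fin.castLE hrd i))
    (Lam₂ : Matrix (Fin (d - r)) (Fin (d - r)) ℝ)
    (hLam₂ : Lam₂ = Matrix.diagonal fun k : Fin (d - r) =>
      lam ⟨r + (k : ℕ), by have := k.isLt; omega⟩)
    (Ar : Matrix (Fin d) (Fin d) ℝ)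
    (hAr : Ar = Matrix.of fun a b => ∑ k : Fin r,
      lam (Fin.castLE hrd k) * v (Fin.castLE hrd k) a * v (Fin.castLE hrd k) b)
    (eps tau kappa mu : ℝ)
    (heps : eps = matInfNorm (A - Ar))
    (htau : tau = matInfNorm E)
    (hkappa : kappa = Real.sqrt d * matMaxNorm (E * V))
    (hmu : mu = matCoherence V)
    (H : Matrix (Fin d) (Fin r) ℝ) (hH : H = Vp * (Vpᵀ * E * V))
    (L₁ : Matrix (Fin r) (Fin r) ℝ) (hL₁ : L₁ = Lam₁ + Vᵀ * E * V)
    (L₂ : Matrix (Fin d) (Fin d) ℝ) (hL₂ : L₂ = Vp * (Lam₂ + Vpᵀ * E * Vp) * Vpᵀ)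
    (omega : ℝ)
    (homega : omega = 8 * (1 + (r : ℝ) * mu) * kappa /
      (|lam (Fin.castLE hrd ⟨r - 1, by omega⟩)| - eps))
    -- eigendecomposition of Ã = A + E, ordered by decreasing |λ̃|
    (lamt : Fin d → ℝ) (vt : Fin d → Fin d → ℝ)
    (heigt : ∀ i, (A + E).mulVec (vt i) = lamt i • vt i)
    (hont : ∀ i j, ∑ k, vt i k * vt j k = if i = j then (1 : ℝ) else 0)
    (hdect : ∀ i j : Fin d, i ≤ j → |lamt j| ≤ |lamt i|)
    (Vt : Matrix (Fin d) (Fin r) ℝ)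
    (hVt : Vt = Matrix.of fun a k => vt (Fin.castLE hrd k) a)
    -- gap condition
    (hgap : max (3 * tau) (64 * (1 + (r : ℝ) * mu) * (r : ℝ) ^ ((3 : ℝ) / 2) *
        Real.sqrt mu * kappa) <
      |lam (Fin.castLE hrd ⟨r - 1, by omega⟩)| - eps)
    -- Q̄ = V_⊥ Q is any solution of the quadratic equation with the max-norm bound
    (Q : Matrix (Fin (d - r)) (Fin r) ℝ)
    (hQsol : (Vp * Q) * L₁ - L₂ * (Vp * Q) = H - (Vp * Q) * Hᵀ * (Vp * Q))
    (hQbound : matMaxNorm (Vp * Q) ≤ omega / Real.sqrt d)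
    (Vbar : Matrix (Fin d) (Fin r) ℝ)
    (hVbar : Vbar = (V + Vp * Q) * matInvSqrt (1 + (Vp * Q)ᵀ * (Vp * Q))) :
    ∃ R : Matrix (Fin r) (Fin r) ℝ, Rᵀ * R = 1 ∧ Vbar * R = Vt := by
  classical
  have hd : 0 < d := lt_of_lt_of_le hr hrd
  have hNe : Nonempty (Fin d) := ⟨⟨0, hd⟩⟩
  have hNer : Nonempty (Fin r) := ⟨⟨0, hr⟩⟩
  have hidx : ∀ k : Fin (d - r), r + (k : ℕ) < d := fun k => by have := k.isLt; omega
  -- abbreviations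
  set At : Matrix (Fin d) (Fin d) ℝ := A + E with hAtdef
  set Qb : Matrix (Fin d) (Fin r) ℝ := Vp * Q with hQbdef
  set Mm : Matrix (Fin d) (Fin r) ℝ := V + Qb with hMmdef
  set G : Matrix (Fin r) (Fin r) ℝ := 1 + Qbᵀ * Qb with hGdef
  set Vtp : Matrix (Fin d) (Fin (d - r)) ℝ :=
    Matrix.of (fun a k => vt ⟨r + (k : ℕ), hidx k⟩ a) with hVtpdef
  set Lamt₂ : Matrix (Fin (d - r)) (Fin (d - r)) ℝ :=
    Matrix.diagonal (fun k => lamt ⟨r + (k : ℕ), hidx k⟩) with hLamt₂def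
  have hcompv := fwz_complete v hon
  have hcompvt := fwz_complete vt hont
  -- block structure facts
  have hcastne : ∀ (k : Fin r) (l : Fin (d - r)) (p : r + (l : ℕ) < d),
      Fin.castLE hrd k ≠ ⟨r + (l : ℕ), p⟩ := by
    intro k l p hc
    have := congrArg Fin.val hc
    simp only [Fin.coe_castLE] at this
    have := k.isLt
    omega
  have hVV : Vᵀ * V = 1 := by
    ext k l
    simp only [Matrix.mul_apply, Matrix.transpose_apply, hV, Matrix.of_apply]
    rw [hon (Fin.castLE hrd k) (Fin.castLE hrd l), Matrix.one_apply]
    by_cases h : k = l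
    · subst h; simp
    · rw [if_neg (fun hc => h (Fin.castLE_injective hrd hc)), if_neg h]
  have hVpVp : Vpᵀ * Vp = 1 := by
    ext k l
    simp only [Matrix.mul_apply, Matrix.transpose_apply, hVp, Matrix.of_apply]
    rw [hon, Matrix.one_apply]
    by_cases h : k = l
    · subst h; simp
    · rw [if_neg, if_neg h]
      intro hc
      have := congrArg Fin.val hc
      simp only at this
      exact h (Fin.ext (by omega))
  have hVVp : Vᵀ * Vp = 0 := by
    ext k l
    simp only [Matrix.mul_apply, Matrix.transpose_apply, hV, hVp, Matrix.of_apply]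
    rw [hon, if_neg (hcastne k l _)]
    rfl
  have hcompV : V * Vᵀ + Vp * Vpᵀ = 1 := by
    ext a b
    have hsplit := fwz_sum_split hrd (fun i => v i a * v i b)
    simp only [Matrix.add_apply, Matrix.mul_apply, Matrix.transpose_apply, hV, hVp,
      Matrix.of_apply, Matrix.one_apply]
    rw [← hcompv a b, hsplit]
  have hAV : A * V = V * Lam₁ := by
    ext a k
    have h := congrFun (heig (Fin.castLE hrd k)) a
    simp only [Matrix.mulVec, dotProduct, Pi.smul_apply, smul_eq_mul] at h
    rw [hLam₁, Matrix.mul_diagonal, Matrix.mul_apply]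
    simp only [hV, Matrix.of_apply]
    rw [h]; ring
  have hAVp : A * Vp = Vp * Lam₂ := by
    ext a k
    have h := congrFun (heig ⟨r + (k : ℕ), hidx k⟩) a
    simp only [Matrix.mulVec, dotProduct, Pi.smul_apply, smul_eq_mul] at h
    rw [hLam₂, Matrix.mul_diagonal, Matrix.mul_apply]
    simp only [hVp, Matrix.of_apply]
    rw [h]; ring
  have hVtVt : Vtᵀ * Vt = 1 := by
    ext k l
    simp only [Matrix.mul_apply, Matrix.transpose_apply, hVt, Matrix.of_apply]
    rw [hont (Fin.castLE hrd k) (Fin.castLE hrd l), Matrix.one_apply]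
    by_cases h : k = l
    · subst h; simp
    · rw [if_neg (fun hc => h (Fin.castLE_injective hrd hc)), if_neg h]
  have hAtT : Atᵀ = At := by rw [hAtdef, Matrix.transpose_add, hAsymm, hEsymm]
  have hAtVtp : At * Vtp = Vtp * Lamt₂ := by
    ext a k
    have h := congrFun (heigt ⟨r + (k : ℕ), hidx k⟩) a
    simp only [Matrix.mulVec, dotProduct, Pi.smul_apply, smul_eq_mul] at h
    rw [hLamt₂def, Matrix.mul_diagonal, Matrix.mul_apply]
    simp only [hVtpdef, Matrix.of_apply]
    rw [h]; ring
  have hLamt₂T : Lamt₂ᵀ = Lamt₂ := by rw [hLamt₂def]; exact Matrix.diagonal_transpose _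
  have hVtpAt : Vtpᵀ * At = Lamt₂ * Vtpᵀ := by
    have h1 := congrArg Matrix.transpose hAtVtp
    rw [Matrix.transpose_mul, Matrix.transpose_mul, hAtT, hLamt₂T] at h1
    exact h1
  -- algebra towards the invariance relation
  have hVQb : Vᵀ * Qb = 0 := by
    rw [hQbdef, ← Matrix.mul_assoc, hVVp, Matrix.zero_mul]
  have hQbV : Qbᵀ * V = 0 := by
    have := congrArg Matrix.transpose hVQb
    simpa [Matrix.transpose_mul] using this
  have hMM : Mmᵀ * Mm = G := by
    rw [hMmdef, hGdef, Matrix.transpose_add, Matrix.add_mul, Matrix.mul_add, Matrix.mul_add,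
      hVV, hVQb, hQbV]
    abel
  have hcomp_apply : ∀ Z : Matrix (Fin d) (Fin r) ℝ,
      V * (Vᵀ * Z) + Vp * (Vpᵀ * Z) = Z := by
    intro Z
    rw [← Matrix.mul_assoc, ← Matrix.mul_assoc, ← Matrix.add_mul, hcompV, Matrix.one_mul]
  set Ssm : Matrix (Fin r) (Fin r) ℝ := L₁ + Hᵀ * Qb with hSsmdef
  have hVpVpQ : Vpᵀ * Qb = Q := by
    rw [hQbdef, ← Matrix.mul_assoc, hVpVp, Matrix.one_mul]
  have e1 : Hᵀ * Qb = Vᵀ * (E * Qb) := by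
    rw [hH]
    simp only [Matrix.transpose_mul, Matrix.transpose_transpose, Matrix.mul_assoc]
    rw [hVpVpQ, ← hQbdef, hEsymm]
  have e2 : L₂ * Qb = Vp * (Lam₂ * Q) + Vp * (Vpᵀ * (E * Qb)) := by
    rw [hL₂]
    simp only [Matrix.add_mul, Matrix.mul_add, Matrix.mul_assoc]
    rw [hVpVpQ, ← hQbdef]
  have e3 : H = Vp * (Vpᵀ * (E * V)) := by
    rw [hH]; simp only [Matrix.mul_assoc]
  have hQbL : Qb * L₁ = Vp * (Lam₂ * Q) + Vp * (Vpᵀ * (E * Qb)) +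
      (Vp * (Vpᵀ * (E * V)) - Qb * (Vᵀ * (E * Qb))) := by
    have h0 := hQsol
    rw [sub_eq_iff_eq_add] at h0
    rw [Matrix.mul_assoc Qb Hᵀ Qb] at h0
    rw [h0, e1, e2, e3]
    abel
  have hKey : At * Mm = Mm * Ssm := by
    have lhs : At * Mm = V * Lam₁ + Vp * (Lam₂ * Q) + (E * V + E * Qb) := by
      rw [hAtdef, hMmdef, Matrix.add_mul, Matrix.mul_add, Matrix.mul_add, hAV]
      rw [hQbdef, ← Matrix.mul_assoc A Vp Q, hAVp, Matrix.mul_assoc]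
    have rhs : Mm * Ssm = (V * (Vᵀ * (E * V)) + Vp * (Vpᵀ * (E * V))) +
        ((V * (Vᵀ * (E * Qb)) + Vp * (Vpᵀ * (E * Qb))) + (V * Lam₁ + Vp * (Lam₂ * Q))) := by
      rw [hSsmdef, hMmdef, Matrix.add_mul, Matrix.mul_add, Matrix.mul_add, hQbL, e1, hL₁,
        Matrix.mul_add]
      simp only [Matrix.mul_assoc]
      abel
    rw [lhs, rhs, hcomp_apply (E * V), hcomp_apply (E * Qb)]
    abel
  -- matInvSqrt facts
  have hGpsd : G.PosSemidef := by
    rw [hGdef]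
    refine Matrix.PosSemidef.add Matrix.PosSemidef.one ?_
    have h := Matrix.posSemidef_conjTranspose_mul_self Qb
    rwa [fwz_ct] at h
  have hGpd : G.PosDef := by
    rw [hGdef]
    refine Matrix.PosDef.add_posSemidef Matrix.PosDef.one ?_
    have h := Matrix.posSemidef_conjTranspose_mul_self Qb
    rwa [fwz_ct] at h
  set s : Matrix (Fin r) (Fin r) ℝ := hGpsd.1.eigenvectorUnitary.1 *
    diagonal ((↑) ∘ (√·) ∘ hGpsd.1.eigenvalues) *
      (star hGpsd.1.eigenvectorUnitary : Matrix (Fin r) (Fin r) ℝ) with hsdef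
  have hss : s * s = G := by
    have hU := Unitary.coe_star_mul_self hGpsd.1.eigenvectorUnitary
    have hsp := hGpsd.1.spectral_theorem
    rw [Unitary.conjStarAlgAut_apply] at hsp
    calc s * s = hGpsd.1.eigenvectorUnitary.1 * (diagonal ((↑) ∘ (√·) ∘ hGpsd.1.eigenvalues) *
          ((star hGpsd.1.eigenvectorUnitary : Matrix (Fin r) (Fin r) ℝ) *
            hGpsd.1.eigenvectorUnitary.1) * diagonal ((↑) ∘ (√·) ∘ hGpsd.1.eigenvalues)) *
          (star hGpsd.1.eigenvectorUnitary : Matrix (Fin r) (Fin r) ℝ) := by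
          simp only [hsdef, Matrix.mul_assoc]
      _ = hGpsd.1.eigenvectorUnitary.1 * diagonal (RCLike.ofReal ∘ hGpsd.1.eigenvalues) *
          (star hGpsd.1.eigenvectorUnitary : Matrix (Fin r) (Fin r) ℝ) := by
          rw [hU, Matrix.mul_one, diagonal_mul_diagonal]
          congr 2
          ext i j
          by_cases hij : i = j
          · subst hij
            simp [Real.mul_self_sqrt (hGpsd.eigenvalues_nonneg i)]
          · simp [hij]
      _ = G := hsp.symm
  have hdets : IsUnit s.det := by
    have h1 : s.det * s.det = G.det := by rw [← Matrix.det_mul, hss]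
    have h2 : (0 : ℝ) < G.det := hGpd.det_pos
    refine isUnit_iff_ne_zero.mpr fun h => ?_
    rw [h, mul_zero] at h1
    exact (ne_of_gt h2) h1.symm
  have hsT : sᵀ = s := by
    simp only [hsdef, Matrix.transpose_mul, Matrix.diagonal_transpose, Unitary.coe_star,
      Matrix.star_eq_conjTranspose, fwz_ct, Matrix.transpose_transpose, Matrix.mul_assoc]
  have hNs : matInvSqrt G = s⁻¹ := by
    unfold matInvSqrt
    rw [dif_pos hGpsd, hsdef]
    congr!
  set N : Matrix (Fin r) (Fin r) ℝ := matInvSqrt G with hNdef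
  have hNs1 : N * s = 1 := by rw [hNs]; exact Matrix.nonsing_inv_mul s hdets
  have hsN1 : s * N = 1 := by rw [hNs]; exact Matrix.mul_nonsing_inv s hdets
  have hNT : Nᵀ = N := by rw [hNs, Matrix.transpose_nonsing_inv, hsT, ← hNs]
  have hVbVb : Vbarᵀ * Vbar = 1 := by
    rw [hVbar, Matrix.transpose_mul, hNT, Matrix.mul_assoc, ← Matrix.mul_assoc Mmᵀ Mm N,
      hMM, ← hss, Matrix.mul_assoc s s N, hsN1, Matrix.mul_one, hNs1]
  have hNNGX : ∀ Xx : Matrix (Fin r) (Fin r) ℝ, N * (N * (G * Xx)) = Xx := by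
    intro Xx
    rw [← hss, Matrix.mul_assoc s s Xx, ← Matrix.mul_assoc N s (s * Xx), hNs1,
      Matrix.one_mul, ← Matrix.mul_assoc N s Xx, hNs1, Matrix.one_mul]
  set S2 : Matrix (Fin r) (Fin r) ℝ := Vbarᵀ * (At * Vbar) with hS2def
  have hAtVbar : At * Vbar = Vbar * S2 := by
    have h1 : At * Vbar = Mm * (Ssm * N) := by
      rw [hVbar, ← Matrix.mul_assoc, hKey, Matrix.mul_assoc]
    have h2 : S2 = N * (G * (Ssm * N)) := by
      rw [hS2def, h1, hVbar, Matrix.transpose_mul, hNT, Matrix.mul_assoc,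
        ← Matrix.mul_assoc Mmᵀ Mm (Ssm * N), hMM]
    rw [h1, hVbar, h2, Matrix.mul_assoc, hNNGX]
  have hS2herm : S2.IsHermitian := by
    have ht : S2ᵀ = S2 := by
      rw [hS2def, Matrix.transpose_mul, Matrix.transpose_mul, Matrix.transpose_transpose,
        hAtT, Matrix.mul_assoc]
    show S2ᴴ = S2
    rw [fwz_ct]; exact ht
  -- spectral decomposition of S2
  set X : Matrix (Fin r) (Fin r) ℝ :=
    (Matrix.IsHermitian.eigenvectorUnitary hS2herm : Matrix (Fin r) (Fin r) ℝ) with hXdef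
  set muh : Fin r → ℝ := Matrix.IsHermitian.eigenvalues hS2herm with hmuhdef
  have hXX : Xᵀ * X = 1 := by
    have h := Unitary.star_mul_self_of_mem (Matrix.IsHermitian.eigenvectorUnitary hS2herm).prop
    rw [Matrix.star_eq_conjTranspose, fwz_ct] at h
    rw [hXdef]
    exact h
  have hXXT : X * Xᵀ = 1 := mul_eq_one_comm.mp hXX
  have hSX : S2 * X = X * Matrix.diagonal muh := by
    have hdiag2 : Xᵀ * S2 * X = Matrix.diagonal muh := by
      have h := hS2herm.conjStarAlgAut_star_eigenvectorUnitary
      simp only [Unitary.conjStarAlgAut_apply, Unitary.coe_star, star_star] at h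
      rw [Matrix.star_eq_conjTranspose, fwz_ct] at h
      rw [hXdef, hmuhdef, h]
      congr 1
    calc S2 * X = (X * Xᵀ) * (S2 * X) := by rw [hXXT, Matrix.one_mul]
      _ = X * (Xᵀ * S2 * X) := by rw [Matrix.mul_assoc, ← Matrix.mul_assoc Xᵀ S2 X]
      _ = X * Matrix.diagonal muh := by rw [hdiag2]
  set U : Matrix (Fin d) (Fin r) ℝ := Vbar * X with hUdef
  have hUU : Uᵀ * U = 1 := by
    rw [hUdef, Matrix.transpose_mul, Matrix.mul_assoc, ← Matrix.mul_assoc Vbarᵀ Vbar X,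
      hVbVb, Matrix.one_mul, hXX]
  have hAtU : At * U = U * Matrix.diagonal muh := by
    rw [hUdef, ← Matrix.mul_assoc, hAtVbar, Matrix.mul_assoc, hSX, ← Matrix.mul_assoc]
  have hUcol : ∀ j, ∑ b, U b j ^ 2 = 1 := by
    intro j
    have h := congrFun (congrFun hUU j) j
    simp only [Matrix.mul_apply, Matrix.transpose_apply, Matrix.one_apply_eq] at h
    simpa [pow_two] using h
  -- quantitative bounds
  have hr1 : r - 1 < r := by omega
  set iR : Fin d := Fin.castLE hrd ⟨r - 1, hr1⟩ with hiRdef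
  have hgap2 : max (3 * tau) (64 * (1 + (r : ℝ) * mu) * (r : ℝ) ^ ((3 : ℝ) / 2) *
      Real.sqrt mu * kappa) < |lam iR| - eps := hgap
  have homega2 : omega = 8 * (1 + (r : ℝ) * mu) * kappa / (|lam iR| - eps) := homega
  have heps0 : 0 ≤ eps := by rw [heps]; exact fwz_inf_nonneg _
  have htau0 : 0 ≤ tau := by rw [htau]; exact fwz_inf_nonneg _
  have hg3 : 3 * tau < |lam iR| - eps := lt_of_le_of_lt (le_max_left _ _) hgap2
  have hgK : 64 * (1 + (r : ℝ) * mu) * (r : ℝ) ^ ((3 : ℝ) / 2) * Real.sqrt mu * kappa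
      < |lam iR| - eps := lt_of_le_of_lt (le_max_right _ _) hgap2
  have hg0 : 0 < |lam iR| - eps := by linarith
  have hlam_le : ∀ k : Fin r, |lam iR| ≤ |lam (Fin.castLE hrd k)| := by
    intro k
    exact hdec (Fin.castLE hrd k) iR (by rw [Fin.le_def]; simp [hiRdef]; omega)
  have hErow : ∀ i, ∑ j, |E i j| ≤ tau := by
    intro i; rw [htau]; exact fwz_row_le_inf E i
  have hEcol : ∀ j, ∑ i, |E i j| ≤ tau := by
    intro j
    have heq : ∀ i, E i j = E j i := by
      intro i
      have h2 : Eᵀ i j = E i j := congrFun (congrFun hEsymm i) j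
      rw [Matrix.transpose_apply] at h2
      exact h2.symm
    calc ∑ i, |E i j| = ∑ i, |E j i| := Finset.sum_congr rfl fun i _ => by rw [heq i]
      _ ≤ tau := hErow j
  have hlam_tail : ∀ k : Fin (d - r), |lam ⟨r + (k : ℕ), hidx k⟩| ≤ eps := by
    intro k
    apply fwz_eig_bound (A - Ar) (v ⟨r + (k : ℕ), hidx k⟩) _ eps
    · intro h0
      have h1 := hon ⟨r + (k : ℕ), hidx k⟩ ⟨r + (k : ℕ), hidx k⟩
      rw [if_pos rfl, h0] at h1
      simp at h1
    · intro a
      have h := congrFun (heig ⟨r + (k : ℕ), hidx k⟩) a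
      simp only [Matrix.mulVec, dotProduct, Pi.smul_apply, smul_eq_mul] at h
      have hAr0 : ∑ b, Ar a b * v ⟨r + (k : ℕ), hidx k⟩ b = 0 := by
        rw [hAr]
        simp only [Matrix.of_apply]
        rw [Finset.sum_congr rfl fun b (_ : b ∈ Finset.univ) => Finset.sum_mul _ _ _,
          Finset.sum_comm]
        refine Finset.sum_eq_zero fun kk _ => ?_
        have hz := hon (Fin.castLE hrd kk) ⟨r + (k : ℕ), hidx k⟩
        rw [if_neg (hcastne kk k _)] at hz
        calc ∑ b, lam (Fin.castLE hrd kk) * v (Fin.castLE hrd kk) a * v (Fin.castLE hrd kk) b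
              * v ⟨r + (k : ℕ), hidx k⟩ b
            = lam (Fin.castLE hrd kk) * v (Fin.castLE hrd kk) a *
              ∑ b, v (Fin.castLE hrd kk) b * v ⟨r + (k : ℕ), hidx k⟩ b := by
              rw [Finset.mul_sum]
              exact Finset.sum_congr rfl fun b _ => by ring
          _ = 0 := by rw [hz, mul_zero]
      simp only [Matrix.sub_apply, sub_mul, Finset.sum_sub_distrib]
      rw [hAr0, sub_zero, h]
    · intro a
      rw [heps]
      exact fwz_row_le_inf _ a
  have hmu1 : 1 ≤ mu := by
    have hVcol : ∀ jj : Fin r, ∑ i, V i jj ^ 2 = 1 := by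
      intro jj
      have h := congrFun (congrFun hVV jj) jj
      simp only [Matrix.mul_apply, Matrix.transpose_apply, Matrix.one_apply_eq] at h
      simpa [pow_two] using h
    have hsum : ∑ i, ∑ jj, V i jj ^ 2 = (r : ℝ) := by
      rw [Finset.sum_comm, Finset.sum_congr rfl fun jj (_ : jj ∈ Finset.univ) => hVcol jj]
      simp
    have hle : (r : ℝ) ≤ (d : ℝ) * ⨆ i, ∑ jj, V i jj ^ 2 := by
      rw [← hsum]
      have h := Finset.sum_le_card_nsmul Finset.univ (fun i => ∑ jj, V i jj ^ 2)
        (⨆ i, ∑ jj, V i jj ^ 2) (fun i _ => fwz_le_csupr (fun i => ∑ jj, V i jj ^ 2) i)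
      simpa [Finset.card_univ, nsmul_eq_mul] using h
    rw [hmu]
    unfold matCoherence
    rw [div_mul_eq_mul_div, le_div_iff₀ (by exact_mod_cast hr : (0:ℝ) < r)]
    linarith
  have hkap0 : 0 ≤ kappa := by
    rw [hkappa]; exact mul_nonneg (Real.sqrt_nonneg _) (fwz_max_nonneg _)
  have hr1ℝ : (1 : ℝ) ≤ (r : ℝ) := by exact_mod_cast hr
  have hrmu0 : (0 : ℝ) < 1 + (r : ℝ) * mu := by
    have h1 : (0 : ℝ) ≤ (r : ℝ) * mu :=
      mul_nonneg (Nat.cast_nonneg r) (le_trans zero_le_one hmu1)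
    linarith
  have homega0 : 0 ≤ omega := by
    rw [homega2]
    apply div_nonneg _ (le_of_lt hg0)
    have := mul_nonneg (mul_nonneg (by norm_num : (0:ℝ) ≤ 8) hrmu0.le) hkap0
    linarith
  have homega_small : omega * (8 * (r : ℝ)) ≤ 1 := by
    rcases eq_or_lt_of_le hkap0 with h0 | hpos
    · rw [homega2, ← h0, mul_zero, zero_div, zero_mul]; norm_num
    · have hr32 : (r : ℝ) ≤ (r : ℝ) ^ ((3 : ℝ) / 2) := by
        calc (r : ℝ) = (r : ℝ) ^ (1 : ℝ) := (Real.rpow_one _).symm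
          _ ≤ (r : ℝ) ^ ((3 : ℝ) / 2) :=
            Real.rpow_le_rpow_of_exponent_le hr1ℝ (by norm_num)
      have hsq1 : (1 : ℝ) ≤ Real.sqrt mu := by
        rw [show (1:ℝ) = Real.sqrt 1 by simp]
        exact Real.sqrt_le_sqrt (by linarith)
      rw [homega2, div_mul_eq_mul_div, div_le_one hg0]
      have t1 : (0:ℝ) ≤ 64 * (1 + (r:ℝ)*mu) * kappa := by
        have := mul_nonneg (mul_nonneg (by norm_num : (0:ℝ) ≤ 64) hrmu0.le) hkap0
        linarith
      have t2 : 64 * (1 + (r:ℝ)*mu) * kappa * (r:ℝ) ≤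
          64 * (1 + (r:ℝ)*mu) * kappa * ((r:ℝ) ^ ((3:ℝ)/2)) :=
        mul_le_mul_of_nonneg_left hr32 t1
      have t3 : (0:ℝ) ≤ 64 * (1 + (r:ℝ)*mu) * kappa * ((r:ℝ) ^ ((3:ℝ)/2)) := by
        exact mul_nonneg t1 (Real.rpow_nonneg (Nat.cast_nonneg r) _)
      have t4 : 64 * (1 + (r:ℝ)*mu) * kappa * ((r:ℝ) ^ ((3:ℝ)/2)) * 1 ≤
          64 * (1 + (r:ℝ)*mu) * kappa * ((r:ℝ) ^ ((3:ℝ)/2)) * Real.sqrt mu :=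
        mul_le_mul_of_nonneg_left hsq1 t3
      linarith [hgK]
  have hfro : (∑ a, ∑ j, Qb a j ^ 2) ≤ 1 / 64 := by
    have hd0' : (0:ℝ) < d := by exact_mod_cast hd
    have hb : ∀ (a : Fin d) (j : Fin r), Qb a j ^ 2 ≤ omega ^ 2 / d := by
      intro a j
      have h1 : |Qb a j| ≤ omega / Real.sqrt d :=
        le_trans (fwz_entry_le_max Qb a j) hQbound
      calc Qb a j ^ 2 = |Qb a j| ^ 2 := (sq_abs _).symm
        _ ≤ (omega / Real.sqrt d) ^ 2 := pow_le_pow_left₀ (abs_nonneg _) h1 2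
        _ = omega ^ 2 / d := by rw [div_pow, Real.sq_sqrt hd0'.le]
    have hro : (∑ a, ∑ j, Qb a j ^ 2) ≤ (r:ℝ) * omega ^ 2 := by
      calc (∑ a, ∑ j, Qb a j ^ 2) ≤ ∑ _a : Fin d, ∑ _j : Fin r, omega ^ 2 / d :=
          Finset.sum_le_sum fun a _ => Finset.sum_le_sum fun j _ => hb a j
        _ = (d:ℝ) * ((r:ℝ) * (omega ^ 2 / d)) := by
            simp [Finset.sum_const, Finset.card_univ, nsmul_eq_mul]
        _ = (r:ℝ) * omega ^ 2 := by
            field_simp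
    exact fwz_arith_fro (r:ℝ) omega _ hr1ℝ homega0 homega_small hro
  -- key lower bound on the eigenvalues associated to ran Vbar
  have hVVbar : Vᵀ * Vbar = N := by
    rw [hVbar, ← Matrix.mul_assoc, hMmdef, Matrix.mul_add, hVV, hVQb, add_zero,
      Matrix.one_mul]
  have hVU : Vᵀ * U = N * X := by rw [hUdef, ← Matrix.mul_assoc, hVVbar]
  set Ym : Matrix (Fin r) (Fin r) ℝ := N * X with hYmdef
  have hUMY : U = Mm * Ym := by
    rw [hUdef, hVbar, Matrix.mul_assoc, ← hYmdef]
  have hUYG : Uᵀ * U = Ymᵀ * Ym + (Qb * Ym)ᵀ * (Qb * Ym) := by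
    calc Uᵀ * U = (Mm * Ym)ᵀ * (Mm * Ym) := by rw [← hUMY]
      _ = Ymᵀ * (G * Ym) := by
          rw [Matrix.transpose_mul, Matrix.mul_assoc, ← Matrix.mul_assoc Mmᵀ Mm Ym, hMM]
      _ = Ymᵀ * Ym + Ymᵀ * (Qbᵀ * (Qb * Ym)) := by
          rw [hGdef, Matrix.add_mul, Matrix.one_mul, Matrix.mul_add,
            Matrix.mul_assoc Qbᵀ Qb Ym]
      _ = Ymᵀ * Ym + (Qb * Ym)ᵀ * (Qb * Ym) := by
          rw [Matrix.transpose_mul Qb Ym, Matrix.mul_assoc Ymᵀ Qbᵀ (Qb * Ym)]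
  have hLam₁T : Lam₁ᵀ = Lam₁ := by rw [hLam₁]; exact Matrix.diagonal_transpose _
  have hVA : Vᵀ * A = Lam₁ * Vᵀ := by
    have h1 := congrArg Matrix.transpose hAV
    rw [Matrix.transpose_mul, Matrix.transpose_mul, hAsymm, hLam₁T] at h1
    exact h1
  have hLamU : Lam₁ * Ym + Vᵀ * (E * U) = Ym * Matrix.diagonal muh := by
    have h1 : Vᵀ * (At * U) = (Vᵀ * U) * Matrix.diagonal muh := by
      rw [hAtU, ← Matrix.mul_assoc]
    rw [hVU] at h1
    rw [← h1, hAtdef, Matrix.add_mul, Matrix.mul_add, ← Matrix.mul_assoc Vᵀ A U, hVA,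
      Matrix.mul_assoc Lam₁ Vᵀ U, hVU]
  have hmuh_big : ∀ j : Fin r, eps + tau < |muh j| := by
    intro j
    by_contra hle
    push_neg at hle
    have hone : (1 : ℝ) = (∑ k, Ym k j ^ 2) + ∑ a, ((Qb * Ym) a j) ^ 2 := by
      have h1 := congrFun (congrFun (hUU.symm.trans hUYG) j) j
      simp only [Matrix.add_apply, Matrix.mul_apply, Matrix.transpose_apply,
        Matrix.one_apply_eq] at h1
      simpa [pow_two, Matrix.mul_apply] using h1
    have hSq : (∑ a, ((Qb * Ym) a j) ^ 2) ≤ (1 / 64) * ∑ k, Ym k j ^ 2 := by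
      have h2 := fwz_frob Qb (fun k => Ym k j)
      have h3 : (∑ a, ((Qb * Ym) a j) ^ 2) = ∑ a, (∑ k, Qb a k * Ym k j) ^ 2 :=
        Finset.sum_congr rfl fun a _ => by rw [Matrix.mul_apply]
      rw [h3]
      refine le_trans h2 (mul_le_mul_of_nonneg_right hfro ?_)
      exact Finset.sum_nonneg fun k _ => sq_nonneg _
    have hy2 : (64 : ℝ) / 65 ≤ ∑ k, Ym k j ^ 2 := by linarith
    have heqk : ∀ k : Fin r,
        (lam (Fin.castLE hrd k) - muh j) * Ym k j = -((Vᵀ * (E * U)) k j) := by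
      intro k
      have h1 := congrFun (congrFun hLamU k) j
      simp only [Matrix.add_apply] at h1
      rw [hLam₁, Matrix.diagonal_mul, Matrix.mul_diagonal] at h1
      linear_combination h1
    have hesq : (∑ k, ((Vᵀ * (E * U)) k j) ^ 2) ≤ tau ^ 2 := by
      have hEU : (∑ a, ((E * U) a j) ^ 2) ≤ tau ^ 2 := by
        have h2 := fwz_opBound E (fun b => U b j) tau htau0 hErow hEcol
        have h3 : (∑ a, ((E * U) a j) ^ 2) = ∑ a, (∑ b, E a b * U b j) ^ 2 :=
          Finset.sum_congr rfl fun a _ => by rw [Matrix.mul_apply]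
        rw [h3]
        calc ∑ a, (∑ b, E a b * U b j) ^ 2 ≤ tau ^ 2 * ∑ b, U b j ^ 2 := h2
          _ = tau ^ 2 := by rw [hUcol j, mul_one]
      have hform : ∀ k : Fin r, (Vᵀ * (E * U)) k j
          = ∑ b, v (Fin.castLE hrd k) b * (E * U) b j := by
        intro k
        rw [Matrix.mul_apply]
        exact Finset.sum_congr rfl fun b _ => by
          simp [hV, Matrix.transpose_apply, Matrix.of_apply]
      have hbess : (∑ k : Fin r, ((Vᵀ * (E * U)) k j) ^ 2)
          ≤ ∑ a, ((E * U) a j) ^ 2 := by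
        have hpar := fwz_parseval v hcompv (fun a => (E * U) a j)
        have hsplit := fwz_sum_split hrd (fun i => (∑ b, v i b * (E * U) b j) ^ 2)
        have hnn : 0 ≤ ∑ kk : Fin (d - r),
            (∑ b, v ⟨r + (kk : ℕ), hidx kk⟩ b * (E * U) b j) ^ 2 :=
          Finset.sum_nonneg fun kk _ => sq_nonneg _
        calc (∑ k : Fin r, ((Vᵀ * (E * U)) k j) ^ 2)
            = ∑ k : Fin r, (∑ b, v (Fin.castLE hrd k) b * (E * U) b j) ^ 2 :=
              Finset.sum_congr rfl fun k _ => by rw [hform]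
          _ ≤ ∑ i : Fin d, (∑ b, v i b * (E * U) b j) ^ 2 := by
              rw [hsplit]; linarith
          _ = ∑ a, ((E * U) a j) ^ 2 := hpar
      exact le_trans hbess hEU
    have hlower : (|lam iR| - eps - tau) ^ 2 * (64 / 65)
        ≤ ∑ k, ((lam (Fin.castLE hrd k) - muh j) * Ym k j) ^ 2 := by
      have h0 : 0 ≤ |lam iR| - eps - tau := by linarith
      have hterm : ∀ k : Fin r, (|lam iR| - eps - tau) ^ 2 * Ym k j ^ 2
          ≤ (lam (Fin.castLE hrd k) - muh j) ^ 2 * Ym k j ^ 2 := by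
        intro k
        have h2 := abs_sub_abs_le_abs_sub (lam (Fin.castLE hrd k)) (muh j)
        have h3 := hlam_le k
        have habs : |lam iR| - eps - tau ≤ |lam (Fin.castLE hrd k) - muh j| := by linarith
        have h4 := pow_le_pow_left₀ h0 habs 2
        rw [sq_abs] at h4
        exact mul_le_mul_of_nonneg_right h4 (sq_nonneg _)
      calc (|lam iR| - eps - tau) ^ 2 * (64 / 65)
          ≤ (|lam iR| - eps - tau) ^ 2 * ∑ k, Ym k j ^ 2 :=
            mul_le_mul_of_nonneg_left hy2 (sq_nonneg _)
        _ = ∑ k, (|lam iR| - eps - tau) ^ 2 * Ym k j ^ 2 := Finset.mul_sum _ _ _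
        _ ≤ ∑ k, (lam (Fin.castLE hrd k) - muh j) ^ 2 * Ym k j ^ 2 :=
            Finset.sum_le_sum fun k _ => hterm k
        _ = ∑ k, ((lam (Fin.castLE hrd k) - muh j) * Ym k j) ^ 2 :=
            Finset.sum_congr rfl fun k _ => (mul_pow _ _ 2).symm
    have hupper : (∑ k, ((lam (Fin.castLE hrd k) - muh j) * Ym k j) ^ 2) ≤ tau ^ 2 := by
      calc (∑ k, ((lam (Fin.castLE hrd k) - muh j) * Ym k j) ^ 2)
          = ∑ k, ((Vᵀ * (E * U)) k j) ^ 2 :=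
            Finset.sum_congr rfl fun k _ => by rw [heqk k, neg_sq]
        _ ≤ tau ^ 2 := hesq
    exact fwz_arith_gap (|lam iR| - eps) tau htau0 hg3 (le_trans hlower hupper)
  -- key upper bound on the residual eigenvalues of At
  have hlamt_tail : ∀ k : Fin (d - r), |lamt ⟨r + (k : ℕ), hidx k⟩| ≤ eps + tau := by
    intro k
    have hrd' : r < d := by have := k.isLt; omega
    have hstep : |lamt ⟨r + (k : ℕ), hidx k⟩| ≤ |lamt ⟨r, hrd'⟩| :=
      hdect ⟨r, hrd'⟩ ⟨r + (k : ℕ), hidx k⟩ (by rw [Fin.le_def]; simp)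
    refine le_trans hstep ?_
    by_contra hbig
    push_neg at hbig
    have hr1d : r + 1 ≤ d := hrd'
    have hbig' : ∀ jj : Fin (r + 1), eps + tau < |lamt (Fin.castLE hr1d jj)| := by
      intro jj
      refine lt_of_lt_of_le hbig (hdect (Fin.castLE hr1d jj) ⟨r, hrd'⟩ ?_)
      rw [Fin.le_def]
      simp only [Fin.coe_castLE]
      omega
    set Gm : Matrix (Fin (r + 1)) (Fin (r + 1)) ℝ := Matrix.of fun i jj =>
      if h : (i : ℕ) < r then
        ∑ a, v (Fin.castLE hrd ⟨(i : ℕ), h⟩) a * vt (Fin.castLE hr1d jj) a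
      else 0 with hGm
    have hdet : Gm.det = 0 := by
      apply Matrix.det_eq_zero_of_row_eq_zero (Fin.last r)
      intro jj
      rw [hGm]
      simp only [Matrix.of_apply]
      rw [dif_neg (by simp [Fin.val_last])]
    obtain ⟨c, hc0, hcv⟩ := (Matrix.exists_mulVec_eq_zero_iff).mpr hdet
    set w : Fin d → ℝ := fun a => ∑ jj, c jj * vt (Fin.castLE hr1d jj) a with hwdef
    have honW : ∀ i j : Fin (r + 1),
        ∑ a, vt (Fin.castLE hr1d i) a * vt (Fin.castLE hr1d j) a
          = if i = j then (1 : ℝ) else 0 := by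
      intro i j
      rw [hont]
      by_cases h : i = j
      · subst h; simp
      · rw [if_neg (fun hc => h (Fin.castLE_injective hr1d hc)), if_neg h]
    have hw2 : (∑ a, w a ^ 2) = ∑ jj, c jj ^ 2 := by
      rw [hwdef]
      exact fwz_coords_norm (fun jj a => vt (Fin.castLE hr1d jj) a) honW c
    have hcs : 0 < ∑ jj, c jj ^ 2 := by
      obtain ⟨jj, hjj⟩ := Function.ne_iff.mp hc0
      refine Finset.sum_pos' (fun i _ => sq_nonneg _) ⟨jj, Finset.mem_univ _, ?_⟩
      have h5 : 0 < |c jj| := abs_pos.mpr hjj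
      rw [← sq_abs]
      exact pow_pos h5 2
    have hVw : ∀ kk : Fin r, (∑ a, v (Fin.castLE hrd kk) a * w a) = 0 := by
      intro kk
      have hkl : (kk : ℕ) < r + 1 := by omega
      have h1 := congrFun hcv ⟨(kk : ℕ), hkl⟩
      simp only [Matrix.mulVec, dotProduct, Pi.zero_apply] at h1
      have h2 : ∀ jj : Fin (r + 1), Gm ⟨(kk : ℕ), hkl⟩ jj * c jj
          = c jj * ∑ a, v (Fin.castLE hrd kk) a * vt (Fin.castLE hr1d jj) a := by
        intro jj
        rw [hGm]
        simp only [Matrix.of_apply]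
        rw [dif_pos (show ((⟨(kk : ℕ), hkl⟩ : Fin (r + 1)) : ℕ) < r from kk.isLt)]
        ring
      rw [Finset.sum_congr rfl fun jj _ => h2 jj] at h1
      rw [hwdef]
      rw [fwz_swap (fun a => v (Fin.castLE hrd kk) a) c
        (fun jj a => vt (Fin.castLE hr1d jj) a)]
      exact h1
    have hAw : ∀ a, (∑ b, A a b * w b)
        = ∑ i, (lam i * ∑ b, v i b * w b) * v i a := by
      intro a
      calc ∑ b, A a b * w b
          = ∑ b, A a b * ∑ i, (∑ c2, v i c2 * w c2) * v i b := by
            refine Finset.sum_congr rfl fun b _ => ?_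
            rw [← fwz_expand v hcompv w b]
        _ = ∑ i, (∑ c2, v i c2 * w c2) * ∑ b, A a b * v i b := by
            exact fwz_swap (fun b => A a b) (fun i => ∑ c2, v i c2 * w c2)
              (fun i b => v i b)
        _ = ∑ i, (lam i * ∑ b, v i b * w b) * v i a := by
            refine Finset.sum_congr rfl fun i _ => ?_
            have h := congrFun (heig i) a
            simp only [Matrix.mulVec, dotProduct, Pi.smul_apply, smul_eq_mul] at h
            rw [h]; ring
    have hAtw : ∀ a, (∑ b, At a b * w b)
        = ∑ jj, (c jj * lamt (Fin.castLE hr1d jj)) * vt (Fin.castLE hr1d jj) a := by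
      intro a
      calc ∑ b, At a b * w b
          = ∑ jj, c jj * ∑ b, At a b * vt (Fin.castLE hr1d jj) b := by
            rw [hwdef]
            exact fwz_swap (fun b => At a b) c (fun jj b => vt (Fin.castLE hr1d jj) b)
        _ = ∑ jj, (c jj * lamt (Fin.castLE hr1d jj)) * vt (Fin.castLE hr1d jj) a := by
            refine Finset.sum_congr rfl fun jj _ => ?_
            have h := congrFun (heigt (Fin.castLE hr1d jj)) a
            simp only [Matrix.mulVec, dotProduct, Pi.smul_apply, smul_eq_mul] at h
            rw [h]; ring
    have het0 : (0 : ℝ) ≤ eps + tau := by linarith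
    have hlow : (eps + tau) ^ 2 * (∑ jj, c jj ^ 2)
        < ∑ a, (∑ b, At a b * w b) ^ 2 := by
      have h1 : (∑ a, (∑ b, At a b * w b) ^ 2)
          = ∑ jj, (c jj * lamt (Fin.castLE hr1d jj)) ^ 2 := by
        rw [Finset.sum_congr rfl fun a (_ : a ∈ Finset.univ) => by rw [hAtw a]]
        exact fwz_coords_norm (fun jj a => vt (Fin.castLE hr1d jj) a) honW _
      rw [h1]
      have h2 : ∀ jj : Fin (r + 1), (eps + tau) ^ 2 * c jj ^ 2
          ≤ (c jj * lamt (Fin.castLE hr1d jj)) ^ 2 := by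
        intro jj
        have h3 := pow_le_pow_left₀ het0 (le_of_lt (hbig' jj)) 2
        rw [sq_abs] at h3
        calc (eps + tau) ^ 2 * c jj ^ 2 ≤ lamt (Fin.castLE hr1d jj) ^ 2 * c jj ^ 2 :=
              mul_le_mul_of_nonneg_right h3 (sq_nonneg _)
          _ = (c jj * lamt (Fin.castLE hr1d jj)) ^ 2 := by ring
      obtain ⟨jj0, hjj0⟩ := Function.ne_iff.mp hc0
      have hstrict : (eps + tau) ^ 2 * c jj0 ^ 2
          < (c jj0 * lamt (Fin.castLE hr1d jj0)) ^ 2 := by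
        have h3 : (eps + tau) ^ 2 < lamt (Fin.castLE hr1d jj0) ^ 2 := by
          have h4 := pow_lt_pow_left₀ (hbig' jj0) het0 (by norm_num : 2 ≠ 0)
          rwa [sq_abs] at h4
        have hc2 : 0 < c jj0 ^ 2 := by
          have h5 : 0 < |c jj0| := abs_pos.mpr hjj0
          rw [← sq_abs]; exact pow_pos h5 2
        calc (eps + tau) ^ 2 * c jj0 ^ 2 < lamt (Fin.castLE hr1d jj0) ^ 2 * c jj0 ^ 2 :=
              mul_lt_mul_of_pos_right h3 hc2
          _ = (c jj0 * lamt (Fin.castLE hr1d jj0)) ^ 2 := by ring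
      calc (eps + tau) ^ 2 * ∑ jj, c jj ^ 2 = ∑ jj, (eps + tau) ^ 2 * c jj ^ 2 :=
            Finset.mul_sum _ _ _
        _ < ∑ jj, (c jj * lamt (Fin.castLE hr1d jj)) ^ 2 :=
            Finset.sum_lt_sum (fun i _ => h2 i) ⟨jj0, Finset.mem_univ _, hstrict⟩
    have hup : (∑ a, (∑ b, At a b * w b) ^ 2)
        ≤ (eps + tau) ^ 2 * (∑ jj, c jj ^ 2) := by
      have hsplitAt : ∀ a, (∑ b, At a b * w b)
          = (∑ b, A a b * w b) + ∑ b, E a b * w b := by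
        intro a
        rw [hAtdef]
        simp [Matrix.add_apply, add_mul, Finset.sum_add_distrib]
      have hP : (∑ a, (∑ b, A a b * w b) ^ 2) ≤ eps ^ 2 * ∑ jj, c jj ^ 2 := by
        have h1 : (∑ a, (∑ b, A a b * w b) ^ 2)
            = ∑ i, (lam i * ∑ b, v i b * w b) ^ 2 := by
          rw [Finset.sum_congr rfl fun a (_ : a ∈ Finset.univ) => by rw [hAw a]]
          exact fwz_coords_norm v hon _
        have hsplit2 := fwz_sum_split hrd (fun i => (lam i * ∑ b, v i b * w b) ^ 2)
        have hz : (∑ kk : Fin r,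
            (lam (Fin.castLE hrd kk) * ∑ b, v (Fin.castLE hrd kk) b * w b) ^ 2) = 0 := by
          refine Finset.sum_eq_zero fun kk _ => ?_
          rw [hVw kk]
          simp
        have hterm : ∀ kk : Fin (d - r),
            (lam ⟨r + (kk : ℕ), hidx kk⟩ * ∑ b, v ⟨r + (kk : ℕ), hidx kk⟩ b * w b) ^ 2
              ≤ eps ^ 2 * (∑ b, v ⟨r + (kk : ℕ), hidx kk⟩ b * w b) ^ 2 := by
          intro kk
          have h3 := pow_le_pow_left₀ (abs_nonneg _) (hlam_tail kk) 2
          rw [sq_abs] at h3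
          calc (lam ⟨r + (kk : ℕ), hidx kk⟩ * ∑ b, v ⟨r + (kk : ℕ), hidx kk⟩ b * w b) ^ 2
              = lam ⟨r + (kk : ℕ), hidx kk⟩ ^ 2 *
                (∑ b, v ⟨r + (kk : ℕ), hidx kk⟩ b * w b) ^ 2 := by ring
            _ ≤ eps ^ 2 * (∑ b, v ⟨r + (kk : ℕ), hidx kk⟩ b * w b) ^ 2 :=
                mul_le_mul_of_nonneg_right h3 (sq_nonneg _)
        have hpar := fwz_parseval v hcompv w
        have hsplit3 := fwz_sum_split hrd (fun i => (∑ b, v i b * w b) ^ 2)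
        have hz3 : (∑ kk : Fin r, (∑ b, v (Fin.castLE hrd kk) b * w b) ^ 2) = 0 := by
          refine Finset.sum_eq_zero fun kk _ => ?_
          rw [hVw kk]
          simp
        rw [h1, hsplit2, hz, zero_add]
        calc (∑ kk : Fin (d - r),
            (lam ⟨r + (kk : ℕ), hidx kk⟩ * ∑ b, v ⟨r + (kk : ℕ), hidx kk⟩ b * w b) ^ 2)
            ≤ ∑ kk : Fin (d - r), eps ^ 2 * (∑ b, v ⟨r + (kk : ℕ), hidx kk⟩ b * w b) ^ 2 :=
              Finset.sum_le_sum fun kk _ => hterm kk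
          _ = eps ^ 2 * ∑ kk : Fin (d - r), (∑ b, v ⟨r + (kk : ℕ), hidx kk⟩ b * w b) ^ 2 :=
              (Finset.mul_sum _ _ _).symm
          _ = eps ^ 2 * ∑ a, w a ^ 2 := by
              rw [← hpar, hsplit3, hz3, zero_add]
          _ = eps ^ 2 * ∑ jj, c jj ^ 2 := by rw [hw2]
      have hQ : (∑ a, (∑ b, E a b * w b) ^ 2) ≤ tau ^ 2 * ∑ jj, c jj ^ 2 := by
        have h2 := fwz_opBound E w tau htau0 hErow hEcol
        rw [hw2] at h2
        exact h2
      have hX2 := Finset.sum_mul_sq_le_sq_mul_sq Finset.univ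
        (fun a => ∑ b, A a b * w b) (fun a => ∑ b, E a b * w b)
      have hsum : (∑ a, (∑ b, At a b * w b) ^ 2)
          = (∑ a, (∑ b, A a b * w b) ^ 2)
            + 2 * (∑ a, (∑ b, A a b * w b) * ∑ b, E a b * w b)
            + ∑ a, (∑ b, E a b * w b) ^ 2 := by
        calc (∑ a, (∑ b, At a b * w b) ^ 2)
            = ∑ a, ((∑ b, A a b * w b) ^ 2
              + (2 * ((∑ b, A a b * w b) * ∑ b, E a b * w b)
                + (∑ b, E a b * w b) ^ 2)) :=
              Finset.sum_congr rfl fun a _ => by rw [hsplitAt a]; ring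
          _ = (∑ a, (∑ b, A a b * w b) ^ 2)
              + (2 * (∑ a, (∑ b, A a b * w b) * ∑ b, E a b * w b)
                + ∑ a, (∑ b, E a b * w b) ^ 2) := by
              rw [Finset.sum_add_distrib, Finset.sum_add_distrib, ← Finset.mul_sum]
          _ = _ := by ring
      rw [hsum]
      exact fwz_arith_cross _ _ _ eps tau _ hP hQ
        (Finset.sum_nonneg fun a _ => sq_nonneg _)
        (Finset.sum_nonneg fun a _ => sq_nonneg _) hX2 heps0 htau0 (le_of_lt hcs)
    linarith
  -- ran U is contained in span of the top r eigenvectors of At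
  have hZ : Vtpᵀ * U = 0 := by
    have hcomm : Lamt₂ * (Vtpᵀ * U) = (Vtpᵀ * U) * Matrix.diagonal muh := by
      rw [← Matrix.mul_assoc Lamt₂ Vtpᵀ U, ← hVtpAt, Matrix.mul_assoc Vtpᵀ At U, hAtU,
        ← Matrix.mul_assoc Vtpᵀ U (Matrix.diagonal muh)]
    ext k j
    simp only [Matrix.zero_apply]
    have he := congrFun (congrFun hcomm k) j
    rw [hLamt₂def, Matrix.diagonal_mul, Matrix.mul_diagonal] at he
    by_contra hne
    have hmu_eq : muh j = lamt ⟨r + (k : ℕ), hidx k⟩ := by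
      have h2 : (lamt ⟨r + (k : ℕ), hidx k⟩ - muh j) * (Vtpᵀ * U) k j = 0 := by
        linear_combination he
      rcases mul_eq_zero.mp h2 with h3 | h3
      · linarith
      · exact absurd h3 hne
    have h4 := hmuh_big j
    rw [hmu_eq] at h4
    exact absurd (hlamt_tail k) (not_le.mpr h4)
  have hUVt : U = Vt * (Vtᵀ * U) := by
    ext a j
    have hexp := fwz_expand vt hcompvt (fun b => U b j) a
    have hZ' : ∀ kk : Fin (d - r), (∑ c, vt ⟨r + (kk : ℕ), hidx kk⟩ c * U c j) = 0 := by
      intro kk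
      have h := congrFun (congrFun hZ kk) j
      simp only [Matrix.mul_apply, Matrix.transpose_apply, hVtpdef, Matrix.of_apply,
        Matrix.zero_apply] at h
      exact h
    calc U a j = ∑ i, (∑ c, vt i c * U c j) * vt i a := hexp
      _ = (∑ k : Fin r, (∑ c, vt (Fin.castLE hrd k) c * U c j) * vt (Fin.castLE hrd k) a)
          + ∑ kk : Fin (d - r),
            (∑ c, vt ⟨r + (kk : ℕ), hidx kk⟩ c * U c j) * vt ⟨r + (kk : ℕ), hidx kk⟩ a :=
          fwz_sum_split hrd _
      _ = ∑ k : Fin r, (∑ c, vt (Fin.castLE hrd k) c * U c j) * vt (Fin.castLE hrd k) a := by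
          rw [Finset.sum_eq_zero (fun (kk : Fin (d - r)) (_ : kk ∈ Finset.univ) => by
            rw [hZ' kk, zero_mul]), add_zero]
      _ = (Vt * (Vtᵀ * U)) a j := by
          rw [Matrix.mul_apply]
          refine Finset.sum_congr rfl fun k _ => ?_
          rw [Matrix.mul_apply]
          simp only [hVt, Matrix.of_apply, Matrix.transpose_apply]
          exact mul_comm _ _
  -- assembly
  set W : Matrix (Fin r) (Fin r) ℝ := Vtᵀ * U with hWdef
  have hWW : Wᵀ * W = 1 := by
    have h1 : Uᵀ * U = Wᵀ * W := by
      conv_lhs => rw [hUVt]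
      rw [Matrix.transpose_mul, Matrix.mul_assoc, ← Matrix.mul_assoc Vtᵀ Vt (Vtᵀ * U),
        hVtVt, Matrix.one_mul, hWdef]
    rw [← h1, hUU]
  have hWWT : W * Wᵀ = 1 := mul_eq_one_comm.mp hWW
  refine ⟨X * Wᵀ, ?_, ?_⟩
  · rw [Matrix.transpose_mul, Matrix.transpose_transpose, Matrix.mul_assoc,
      ← Matrix.mul_assoc Xᵀ X Wᵀ, hXX, Matrix.one_mul, hWWT]
  · rw [← Matrix.mul_assoc, ← hUdef]
    conv_lhs => rw [hUVt]
    rw [Matrix.mul_assoc, hWWT, Matrix.mul_one]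
end

section
/- Let Q̄ ∈ ℝ^{d×r} and ω ≥ 0 satisfy ‖Q̄‖_max ≤ ω/√d. If rω² < 1/2, then ‖(I_r + Q̄ᵀQ̄)^{−1/2} − I_r‖_max ≤ rω² and ‖(I_r + Q̄ᵀQ̄)^{−1/2}‖_max ≤ 3/2, where (I_r + Q̄ᵀQ̄)^{−1/2} denotes the inverse of the positive-definite square root of I_r + Q̄ᵀQ̄. -/
open Matrix BigOperators

private lemma matMaxNorm_le' {m n : Type*} [Fintype m] [Fintype n] {M : Matrix m n ℝ} {c : ℝ}
    (hc : 0 ≤ c) (h : ∀ i j, |M i j| ≤ c) : matMaxNorm M ≤ c :=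
  Real.iSup_le (fun i => Real.iSup_le (fun j => h i j) hc) hc

private lemma abs_entry_le_matMaxNorm {m n : Type*} [Fintype m] [Fintype n] (M : Matrix m n ℝ)
    (i : m) (j : n) : |M i j| ≤ matMaxNorm M := by
  calc |M i j| ≤ ⨆ j, |M i j| :=
    le_ciSup (f := fun j => |M i j|) (Set.finite_range _).bddAbove j
  _ ≤ matMaxNorm M :=
    le_ciSup (f := fun i => ⨆ j, |M i j|) (Set.finite_range _).bddAbove i

private lemma psd_diag_nonneg {n : Type*} [Fintype n] [DecidableEq n] {M : Matrix n n ℝ}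
    (hM : M.PosSemidef) (m : n) : 0 ≤ M m m := by
  have := hM.diag_nonneg (i := m)
  simpa [dotProduct, Matrix.mulVec, Pi.single_apply, Finset.sum_ite_eq] using this

private lemma entry_bd {r : ℕ} (U : Matrix (Fin r) (Fin r) ℝ) (g : Fin r → ℝ) (c : ℝ)
    (hc : 0 ≤ c) (hU : ∀ j, ∑ m, U j m ^ 2 = 1) (hg : ∀ m, |g m| ≤ c) (j k : Fin r) :
    |∑ m, U j m * g m * U k m| ≤ c := by
  have hcs := Finset.sum_mul_sq_le_sq_mul_sq Finset.univ (fun m => |U j m|) (fun m => |U k m|)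
  have h1 : ∑ m, |U j m| ^ 2 = 1 := by simpa [sq_abs] using hU j
  have h2 : ∑ m, |U k m| ^ 2 = 1 := by simpa [sq_abs] using hU k
  rw [h1, h2, one_mul] at hcs
  have hsnn : (0:ℝ) ≤ ∑ m, |U j m| * |U k m| :=
    Finset.sum_nonneg fun m _ => mul_nonneg (abs_nonneg _) (abs_nonneg _)
  have hle1 : ∑ m, |U j m| * |U k m| ≤ 1 := by nlinarith
  calc |∑ m, U j m * g m * U k m| ≤ ∑ m, |U j m * g m * U k m| :=
        Finset.abs_sum_le_sum_abs _ _
    _ = ∑ m, |U j m| * |g m| * |U k m| := by simp [abs_mul]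
    _ ≤ ∑ m, |U j m| * c * |U k m| := Finset.sum_le_sum (fun m _ =>
        mul_le_mul_of_nonneg_right
          (mul_le_mul_of_nonneg_left (hg m) (abs_nonneg _)) (abs_nonneg _))
    _ = c * ∑ m, |U j m| * |U k m| := by
        rw [Finset.mul_sum]
        refine Finset.sum_congr rfl fun m _ => by ring
    _ ≤ c * 1 := by nlinarith
    _ = c := mul_one c

/-- Entrywise bounds on (I + Q̄ᵀQ̄)^{-1/2} (Lemma A.4 of Fan–Wang–Zhong). -/
theorem inv_sqrt_max_norm_bound
    (d r : ℕ) (Qb : Matrix (Fin d) (Fin r) ℝ) (omega : ℝ) (homega : 0 ≤ omega)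
    (hQb : matMaxNorm Qb ≤ omega / Real.sqrt d)
    (hsmall : (r : ℝ) * omega ^ 2 < 1 / 2) :
    matMaxNorm (matInvSqrt (1 + Qbᵀ * Qb) - 1) ≤ (r : ℝ) * omega ^ 2 ∧
      matMaxNorm (matInvSqrt (1 + Qbᵀ * Qb)) ≤ 3 / 2 := by
  classical
  have hpsdA : (Qbᵀ * Qb).PosSemidef := posSemidef_conjTranspose_mul_self Qb
  have hPD : (1 + Qbᵀ * Qb).PosDef := Matrix.PosDef.one.add_posSemidef hpsdA
  have hsd : (1 + Qbᵀ * Qb).PosSemidef := hPD.posSemidef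
  set μ : Fin r → ℝ := hPD.1.eigenvalues with hμdef
  set U : Matrix (Fin r) (Fin r) ℝ := (hPD.1.eigenvectorUnitary : Matrix (Fin r) (Fin r) ℝ)
    with hUdef
  have hUU : U * star U = 1 := Matrix.mem_unitaryGroup_iff.mp hPD.1.eigenvectorUnitary.2
  have hU'U : star U * U = 1 := Matrix.mem_unitaryGroup_iff'.mp hPD.1.eigenvectorUnitary.2
  have hspec : star U * (1 + Qbᵀ * Qb) * U = diagonal μ := by
    simpa [Unitary.conjStarAlgAut_apply] using hPD.1.conjStarAlgAut_star_eigenvectorUnitary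
  have hdiagA : star U * (Qbᵀ * Qb) * U = diagonal μ - 1 := by
    have h1 : star U * (1 + Qbᵀ * Qb) * U = 1 + star U * (Qbᵀ * Qb) * U := by
      rw [mul_add, add_mul, mul_one, hU'U]
    rw [hspec] at h1
    rw [h1]; abel
  have hpsdD : (diagonal μ - 1 : Matrix (Fin r) (Fin r) ℝ).PosSemidef := by
    have h := hpsdA.conjTranspose_mul_mul_same U
    rw [← Matrix.star_eq_conjTranspose, hdiagA] at h
    exact h
  have hdiagnn : ∀ m, (0:ℝ) ≤ μ m - 1 := by
    intro m
    have := psd_diag_nonneg hpsdD m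
    simpa using this
  -- trace computation
  have htrace : ∑ m, (μ m - 1) = ∑ j, ∑ i, Qb i j ^ 2 := by
    have h2 : trace (star U * (Qbᵀ * Qb) * U) = trace (Qbᵀ * Qb) := by
      rw [Matrix.trace_mul_cycle, hUU, one_mul]
    rw [hdiagA] at h2
    have h3 : trace (diagonal μ - 1 : Matrix (Fin r) (Fin r) ℝ) = ∑ m, (μ m - 1) := by
      simp [Matrix.trace, Matrix.diag, Matrix.sub_apply, Finset.sum_sub_distrib]
    have h4 : trace (Qbᵀ * Qb) = ∑ j, ∑ i, Qb i j ^ 2 := by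
      simp [Matrix.trace, Matrix.diag, Matrix.mul_apply, pow_two]
    rw [h3, h4] at h2
    exact h2
  have htrb : ∑ j, ∑ i, Qb i j ^ 2 ≤ (r:ℝ) * omega ^ 2 := by
    have hcol : ∀ j, ∑ i, Qb i j ^ 2 ≤ omega ^ 2 := by
      intro j
      rcases Nat.eq_zero_or_pos d with hd | hd
      · subst hd; simpa using sq_nonneg omega
      · have hd' : (0:ℝ) < d := by exact_mod_cast hd
        have hent : ∀ i, Qb i j ^ 2 ≤ omega ^ 2 / d := by
          intro i
          have h1 : |Qb i j| ≤ omega / Real.sqrt d :=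
            le_trans (abs_entry_le_matMaxNorm Qb i j) hQb
          have h2 : Qb i j ^ 2 ≤ (omega / Real.sqrt d) ^ 2 := by
            rw [← sq_abs]
            exact pow_le_pow_left₀ (abs_nonneg _) h1 2
          have h3 : (omega / Real.sqrt d) ^ 2 = omega ^ 2 / d := by
            rw [div_pow, Real.sq_sqrt (le_of_lt hd')]
          linarith
        calc ∑ i, Qb i j ^ 2 ≤ ∑ _i : Fin d, omega ^ 2 / d :=
              Finset.sum_le_sum (fun i _ => hent i)
          _ = d * (omega ^ 2 / d) := by
              simp [Finset.sum_const, mul_comm]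
          _ = omega ^ 2 := by field_simp
    calc ∑ j, ∑ i, Qb i j ^ 2 ≤ ∑ _j : Fin r, omega ^ 2 :=
          Finset.sum_le_sum (fun j _ => hcol j)
      _ = (r:ℝ) * omega ^ 2 := by simp [Finset.sum_const, mul_comm]
  have hμub : ∀ m, μ m - 1 ≤ (r:ℝ) * omega ^ 2 := by
    intro m
    have h1 : μ m - 1 ≤ ∑ m', (μ m' - 1) :=
      Finset.single_le_sum (fun i _ => hdiagnn i) (Finset.mem_univ m)
    rw [htrace] at h1
    linarith
  -- eigenvalue function bound
  have hgb : ∀ m, |(Real.sqrt (μ m))⁻¹ - 1| ≤ (r:ℝ) * omega ^ 2 := by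
    intro m
    have h1 : (1:ℝ) ≤ μ m := by linarith [hdiagnn m]
    have hs1 : 1 ≤ Real.sqrt (μ m) := by
      rw [show (1:ℝ) = Real.sqrt 1 by simp]
      exact Real.sqrt_le_sqrt h1
    have hs0 : (0:ℝ) < Real.sqrt (μ m) := by linarith
    have hsq : Real.sqrt (μ m) * Real.sqrt (μ m) = μ m := Real.mul_self_sqrt (by linarith)
    have hinvle : (Real.sqrt (μ m))⁻¹ ≤ 1 := inv_le_one_of_one_le₀ hs1
    have hinvpos : (0:ℝ) < (Real.sqrt (μ m))⁻¹ := inv_pos.mpr hs0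
    have hinv : Real.sqrt (μ m) * (Real.sqrt (μ m))⁻¹ = 1 := mul_inv_cancel₀ hs0.ne'
    rw [abs_sub_comm, abs_of_nonneg (by linarith)]
    have key : 1 - (Real.sqrt (μ m))⁻¹ ≤ μ m - 1 := by nlinarith
    linarith [hμub m]
  -- inverse square root formula
  set B : Matrix (Fin r) (Fin r) ℝ :=
    U * diagonal (fun m => (Real.sqrt (μ m))⁻¹) * star U with hB
  have hsqrt : (hsd.1.eigenvectorUnitary.1 * diagonal ((↑) ∘ (√·) ∘ hsd.1.eigenvalues) *
      (star hsd.1.eigenvectorUnitary : Matrix (Fin r) (Fin r) ℝ)) = U * diagonal (fun m => Real.sqrt (μ m)) * star U := rfl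
  have hD : (diagonal (fun m => (Real.sqrt (μ m))⁻¹) : Matrix (Fin r) (Fin r) ℝ) *
      diagonal (fun m => Real.sqrt (μ m)) = 1 := by
    rw [Matrix.diagonal_mul_diagonal]
    have hfun : (fun m => (Real.sqrt (μ m))⁻¹ * Real.sqrt (μ m)) = fun _ : Fin r => (1:ℝ) := by
      funext m
      have h1 : (1:ℝ) ≤ μ m := by linarith [hdiagnn m]
      have hs0 : (0:ℝ) < Real.sqrt (μ m) := Real.sqrt_pos.mpr (by linarith)
      exact inv_mul_cancel₀ hs0.ne'
    rw [hfun]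
    exact Matrix.diagonal_one
  have hBsq : B * (hsd.1.eigenvectorUnitary.1 * diagonal ((↑) ∘ (√·) ∘ hsd.1.eigenvalues) *
      (star hsd.1.eigenvectorUnitary : Matrix (Fin r) (Fin r) ℝ)) = 1 := by
    rw [hB, hsqrt]
    calc U * diagonal (fun m => (Real.sqrt (μ m))⁻¹) * star U *
          (U * diagonal (fun m => Real.sqrt (μ m)) * star U)
        = U * (diagonal (fun m => (Real.sqrt (μ m))⁻¹) * ((star U * U) *
            (diagonal (fun m => Real.sqrt (μ m)) * star U))) := by
          simp only [Matrix.mul_assoc]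
      _ = U * ((diagonal (fun m => (Real.sqrt (μ m))⁻¹) *
            diagonal (fun m => Real.sqrt (μ m))) * star U) := by
          rw [hU'U, one_mul, Matrix.mul_assoc]
      _ = 1 := by rw [hD, one_mul, hUU]
  have hBinv : matInvSqrt (1 + Qbᵀ * Qb) = B := by
    have hinst : (fun a b => Classical.propDecidable (a = b)) = instDecidableEqFin r :=
      Subsingleton.elim _ _
    rw [matInvSqrt]
    rw [dif_pos hsd]
    rw [hinst]
    exact Matrix.inv_eq_left_inv hBsq
  -- row norms of U
  have hUnorm : ∀ j, ∑ m, U j m ^ 2 = 1 := by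
    intro j
    have h := congrFun (congrFun hUU j) j
    simpa [Matrix.mul_apply, Matrix.one_apply, pow_two, Matrix.star_apply] using h
  -- entry formula for B - 1
  have hBm1 : B - 1 = U * diagonal (fun m => (Real.sqrt (μ m))⁻¹ - 1) * star U := by
    have hd1 : (diagonal (fun m => (Real.sqrt (μ m))⁻¹) : Matrix (Fin r) (Fin r) ℝ) =
        diagonal (fun m => (Real.sqrt (μ m))⁻¹ - 1) + 1 := by
      ext i k
      by_cases h : i = k
      · subst h
        simp [Matrix.diagonal_apply_eq, Matrix.one_apply_eq]
      · simp [Matrix.diagonal_apply_ne _ h, Matrix.one_apply_ne h]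
    rw [hB, hd1, mul_add, mul_one, add_mul, hUU]
    abel
  have hBm1entry : ∀ j k, (B - 1) j k = ∑ m, U j m * ((Real.sqrt (μ m))⁻¹ - 1) * U k m := by
    intro j k
    rw [hBm1]
    rw [Matrix.mul_apply]
    refine Finset.sum_congr rfl fun m _ => ?_
    rw [Matrix.mul_diagonal, Matrix.star_apply, star_trivial]
  have hrw2 : (0:ℝ) ≤ (r:ℝ) * omega ^ 2 := by positivity
  have hmain : ∀ j k, |(B - 1) j k| ≤ (r:ℝ) * omega ^ 2 := by
    intro j k
    rw [hBm1entry]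
    exact entry_bd U _ _ hrw2 hUnorm hgb j k
  constructor
  · rw [hBinv]
    exact matMaxNorm_le' hrw2 hmain
  · rw [hBinv]
    apply matMaxNorm_le' (by norm_num)
    intro j k
    have h1 := hmain j k
    have h2 : |(1 : Matrix (Fin r) (Fin r) ℝ) j k| ≤ 1 := by
      by_cases h : j = k <;> simp [Matrix.one_apply, h]
    have h3 : B j k = (B - 1) j k + (1 : Matrix (Fin r) (Fin r) ℝ) j k := by
      simp [Matrix.sub_apply]
    rw [h3]
    calc |(B - 1) j k + (1 : Matrix (Fin r) (Fin r) ℝ) j k| ≤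
          |(B - 1) j k| + |(1 : Matrix (Fin r) (Fin r) ℝ) j k| := abs_add_le _ _
      _ ≤ (r:ℝ) * omega ^ 2 + 1 := add_le_add h1 h2
      _ ≤ 3 / 2 := by linarith
end
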